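/- arXiv:1302.4285 — 4 statements merged into one kernel-verified Lean document; each statement's English description precedes it below -/
import Mathlib

section
/- Let p, q, r, u be integers with p, q, r, u ≥ 2, p even and r odd. Then the lattice sum S = ∑ 1/(m^p · n^q · (m+n)^q · (m+2n)^r · (m+3n)^u · (2m+3n)^u), taken over all pairs (m, n) with n ≥ 1 an integer and m a nonzero integer such that m+n ≠ 0, m+2n ≠ 0, m+3n ≠ 0 and 2m+3n ≠ 0, converges and equals 2·ζ₂(p,q,q,r,u,u; G₂). -/
/-- The zeta-function of the root system `G₂` at a tuple of natural number exponents: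
`ζ₂(s₁,…,s₆;G₂) = ∑_{m,n≥1} 1/(m^{s₁} n^{s₂} (m+n)^{s₃} (m+2n)^{s₄} (m+3n)^{s₅} (2m+3n)^{s₆})`. -/
noncomputable def zetaG2 (s₁ s₂ s₃ s₄ s₅ s₆ : ℕ) : ℝ :=
  ∑' (m : ℕ+) (n : ℕ+),
    1 / (((m : ℕ) : ℝ) ^ s₁ * ((n : ℕ) : ℝ) ^ s₂ * (((m : ℕ) : ℝ) + ((n : ℕ) : ℝ)) ^ s₃ *
      (((m : ℕ) : ℝ) + 2 * ((n : ℕ) : ℝ)) ^ s₄ * (((m : ℕ) : ℝ) + 3 * ((n : ℕ) : ℝ)) ^ s₅ *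
      (2 * ((m : ℕ) : ℝ) + 3 * ((n : ℕ) : ℝ)) ^ s₆)


/-- The summand of the `G₂` lattice sum at a lattice point `(m,n) ∈ ℤ²`,
with exponents `(a,b,c,d,e,f)` on `m, n, m+n, m+2n, m+3n, 2m+3n` respectively. -/
noncomputable def latticeTerm (a b c d e f : ℕ) (x : ℤ × ℤ) : ℝ :=
  1 / ((x.1 : ℝ) ^ a * (x.2 : ℝ) ^ b * ((x.1 : ℝ) + (x.2 : ℝ)) ^ c *
    ((x.1 : ℝ) + 2 * (x.2 : ℝ)) ^ d * ((x.1 : ℝ) + 3 * (x.2 : ℝ)) ^ e *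
    (2 * (x.1 : ℝ) + 3 * (x.2 : ℝ)) ^ f)

/-- The index set of the lattice sum: `n ≥ 1`, `m ≠ 0`, `m+n ≠ 0`, `m+2n ≠ 0`, `m+3n ≠ 0`,
`2m+3n ≠ 0`. -/
def latticeCondN (x : ℤ × ℤ) : Prop :=
  1 ≤ x.2 ∧ x.1 ≠ 0 ∧ x.1 + x.2 ≠ 0 ∧ x.1 + 2 * x.2 ≠ 0 ∧ x.1 + 3 * x.2 ≠ 0 ∧
    2 * x.1 + 3 * x.2 ≠ 0

namespace G2Aux

/-- The positive-quadrant summand, with exponents on `x, y, x+y, x+2y, x+3y, 2x+3y`. -/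
noncomputable def F (s₁ s₂ s₃ s₄ s₅ s₆ : ℕ) (z : ℕ+ × ℕ+) : ℝ :=
  1 / (((z.1 : ℕ) : ℝ) ^ s₁ * ((z.2 : ℕ) : ℝ) ^ s₂ *
    (((z.1 : ℕ) : ℝ) + ((z.2 : ℕ) : ℝ)) ^ s₃ *
    (((z.1 : ℕ) : ℝ) + 2 * ((z.2 : ℕ) : ℝ)) ^ s₄ *
    (((z.1 : ℕ) : ℝ) + 3 * ((z.2 : ℕ) : ℝ)) ^ s₅ *
    (2 * ((z.1 : ℕ) : ℝ) + 3 * ((z.2 : ℕ) : ℝ)) ^ s₆)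

lemma one_le_coe (x : ℕ+) : (1 : ℝ) ≤ ((x : ℕ) : ℝ) := by exact_mod_cast x.one_le

lemma summable_F (s₁ s₂ s₃ s₄ s₅ s₆ : ℕ) (h1 : 2 ≤ s₁) (h2 : 2 ≤ s₂) :
    Summable (F s₁ s₂ s₃ s₄ s₅ s₆) := by
  have base : Summable (fun n : ℕ+ => 1 / ((n : ℕ) : ℝ) ^ 2) := by
    have h : Summable (fun n : ℕ => 1 / (n : ℝ) ^ 2) :=
      Real.summable_one_div_nat_pow.mpr one_lt_two
    exact h.comp_injective PNat.coe_injective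
  have h0 : (0 : ℕ+ → ℝ) ≤ (fun n : ℕ+ => 1 / ((n : ℕ) : ℝ) ^ 2) := by
    intro n
    positivity
  have hb := base.mul_of_nonneg base h0 h0
  refine Summable.of_nonneg_of_le (fun z => ?_) (fun z => ?_) hb
  · obtain ⟨x, y⟩ := z
    have ha := one_le_coe x
    have hb' := one_le_coe y
    simp only [F]
    positivity
  · obtain ⟨x, y⟩ := z
    have ha := one_le_coe x
    have hb' := one_le_coe y
    simp only [F]
    rw [div_mul_div_comm, one_mul]
    refine one_div_le_one_div_of_le (by positivity) ?_
    calc ((x : ℕ) : ℝ) ^ 2 * ((y : ℕ) : ℝ) ^ 2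
        = ((x : ℕ) : ℝ) ^ 2 * ((y : ℕ) : ℝ) ^ 2 * 1 * 1 * 1 * 1 := by ring
      _ ≤ _ := by
          gcongr
          · exact one_le_pow₀ (by linarith)
          · exact one_le_pow₀ (by linarith)
          · exact one_le_pow₀ (by linarith)
          · exact one_le_pow₀ (by linarith)

lemma zeta_eq (s₁ s₂ s₃ s₄ s₅ s₆ : ℕ) (h1 : 2 ≤ s₁) (h2 : 2 ≤ s₂) :
    zetaG2 s₁ s₂ s₃ s₄ s₅ s₆ = ∑' z, F s₁ s₂ s₃ s₄ s₅ s₆ z :=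
  (Summable.tsum_prod (summable_F s₁ s₂ s₃ s₄ s₅ s₆ h1 h2)).symm

lemma hasSum_sumElim {α β : Type*} {f : α → ℝ} {g : β → ℝ} {a b : ℝ}
    (hf : HasSum f a) (hg : HasSum g b) : HasSum (Sum.elim f g) (a + b) := by
  have h1 : HasSum ((Sum.elim f g) ∘ Sum.inl) a := hf
  have h2 : HasSum ((Sum.elim f g) ∘ Sum.inr) b := hg
  exact HasSum.add_isCompl Set.isCompl_range_inl_range_inr
    ((Sum.inl_injective.hasSum_range_iff).mpr h1)
    ((Sum.inr_injective.hasSum_range_iff).mpr h2)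

@[simp] lemma pnat_mk_coe (n : ℕ) (h : 0 < n) : PNat.val ⟨n, h⟩ = n := rfl

/-- The index type: six copies of `ℕ+ × ℕ+`, one per sector. -/
abbrev Idx : Type :=
  (ℕ+ × ℕ+) ⊕ ((ℕ+ × ℕ+) ⊕ ((ℕ+ × ℕ+) ⊕ ((ℕ+ × ℕ+) ⊕ ((ℕ+ × ℕ+) ⊕ (ℕ+ × ℕ+)))))

/-- The six-sector parametrization of the lattice index set. -/
def phi : Idx → ℤ × ℤ
  | Sum.inl z => (((z.1 : ℕ) : ℤ), ((z.2 : ℕ) : ℤ))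
  | Sum.inr (Sum.inl z) => (-((z.1 : ℕ) : ℤ), ((z.1 : ℕ) : ℤ) + ((z.2 : ℕ) : ℤ))
  | Sum.inr (Sum.inr (Sum.inl z)) =>
      (-(((z.1 : ℕ) : ℤ) + 3 * ((z.2 : ℕ) : ℤ)), ((z.1 : ℕ) : ℤ) + 2 * ((z.2 : ℕ) : ℤ))
  | Sum.inr (Sum.inr (Sum.inr (Sum.inl z))) =>
      (-(2 * ((z.1 : ℕ) : ℤ) + 3 * ((z.2 : ℕ) : ℤ)), ((z.1 : ℕ) : ℤ) + 2 * ((z.2 : ℕ) : ℤ))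
  | Sum.inr (Sum.inr (Sum.inr (Sum.inr (Sum.inl z)))) =>
      (-(2 * ((z.1 : ℕ) : ℤ) + 3 * ((z.2 : ℕ) : ℤ)), ((z.1 : ℕ) : ℤ) + ((z.2 : ℕ) : ℤ))
  | Sum.inr (Sum.inr (Sum.inr (Sum.inr (Sum.inr z)))) =>
      (-(((z.1 : ℕ) : ℤ) + 3 * ((z.2 : ℕ) : ℤ)), ((z.2 : ℕ) : ℤ))

lemma phi_mem (w : Idx) : latticeCondN (phi w) := by
  rcases w with ⟨x, y⟩ | ⟨x, y⟩ | ⟨x, y⟩ | ⟨x, y⟩ | ⟨x, y⟩ | ⟨x, y⟩ <;>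
    · have hx := x.pos
      have hy := y.pos
      simp only [phi, latticeCondN]
      omega

/-- The parametrization, as a map into the subtype. -/
def Phi (w : Idx) : {x : ℤ × ℤ // latticeCondN x} := ⟨phi w, phi_mem w⟩

lemma Phi_inj : Function.Injective Phi := by
  intro w w' h
  have h' : phi w = phi w' := congrArg Subtype.val h
  clear h
  rcases w with ⟨x, y⟩ | ⟨x, y⟩ | ⟨x, y⟩ | ⟨x, y⟩ | ⟨x, y⟩ | ⟨x, y⟩ <;>
    rcases w' with ⟨x', y'⟩ | ⟨x', y'⟩ | ⟨x', y'⟩ | ⟨x', y'⟩ | ⟨x', y'⟩ | ⟨x', y'⟩ <;>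
      · have hx := x.pos
        have hy := y.pos
        have hx' := x'.pos
        have hy' := y'.pos
        simp only [phi, Prod.mk.injEq] at h'
        obtain ⟨h1, h2⟩ := h'
        first
          | (exfalso; omega)
          | (have ex : x = x' := PNat.coe_injective (by omega)
             have ey : y = y' := PNat.coe_injective (by omega)
             rw [ex, ey])

lemma Phi_surj : Function.Surjective Phi := by
  rintro ⟨⟨m, n⟩, hc⟩
  obtain ⟨h1, h2, h3, h4, h5, h6⟩ := hc
  simp only at h1 h2 h3 h4 h5 h6
  by_cases c1 : 1 ≤ m
  · refine ⟨Sum.inl (⟨m.toNat, by omega⟩, ⟨n.toNat, by omega⟩), Subtype.ext ?_⟩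
    simp only [Phi, phi, pnat_mk_coe, Prod.mk.injEq]
    omega
  by_cases c2 : 1 ≤ m + n
  · refine ⟨Sum.inr (Sum.inl (⟨(-m).toNat, by omega⟩, ⟨(m + n).toNat, by omega⟩)),
      Subtype.ext ?_⟩
    simp only [Phi, phi, pnat_mk_coe, Prod.mk.injEq]
    omega
  by_cases c3 : 1 ≤ 2 * m + 3 * n
  · refine ⟨Sum.inr (Sum.inr (Sum.inl (⟨(2 * m + 3 * n).toNat, by omega⟩,
      ⟨(-(m + n)).toNat, by omega⟩))), Subtype.ext ?_⟩
    simp only [Phi, phi, pnat_mk_coe, Prod.mk.injEq]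
    omega
  by_cases c4 : 1 ≤ m + 2 * n
  · refine ⟨Sum.inr (Sum.inr (Sum.inr (Sum.inl (⟨(-(2 * m + 3 * n)).toNat, by omega⟩,
      ⟨(m + 2 * n).toNat, by omega⟩)))), Subtype.ext ?_⟩
    simp only [Phi, phi, pnat_mk_coe, Prod.mk.injEq]
    omega
  by_cases c5 : 1 ≤ m + 3 * n
  · refine ⟨Sum.inr (Sum.inr (Sum.inr (Sum.inr (Sum.inl (⟨(m + 3 * n).toNat, by omega⟩,
      ⟨(-(m + 2 * n)).toNat, by omega⟩))))), Subtype.ext ?_⟩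
    simp only [Phi, phi, pnat_mk_coe, Prod.mk.injEq]
    omega
  · refine ⟨Sum.inr (Sum.inr (Sum.inr (Sum.inr (Sum.inr (⟨(-(m + 3 * n)).toNat, by omega⟩,
      ⟨n.toNat, by omega⟩))))), Subtype.ext ?_⟩
    simp only [Phi, phi, pnat_mk_coe, Prod.mk.injEq]
    omega

lemma latticeTerm_eq (a b c d e f : ℕ) (v : ℤ × ℤ) (P1 P2 P3 P4 P5 P6 : ℝ)
    (h1 : (v.1 : ℝ) = P1) (h2 : (v.2 : ℝ) = P2)
    (h3 : (v.1 : ℝ) + (v.2 : ℝ) = P3) (h4 : (v.1 : ℝ) + 2 * (v.2 : ℝ) = P4)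
    (h5 : (v.1 : ℝ) + 3 * (v.2 : ℝ) = P5) (h6 : 2 * (v.1 : ℝ) + 3 * (v.2 : ℝ) = P6) :
    latticeTerm a b c d e f v =
      1 / (P1 ^ a * P2 ^ b * P3 ^ c * P4 ^ d * P5 ^ e * P6 ^ f) := by
  unfold latticeTerm
  rw [h3, h4, h5, h6, h1, h2]

section Terms

variable {p q r u : ℕ}

lemma term0 (x y : ℕ+) :
    latticeTerm p q q r u u (((x : ℕ) : ℤ), ((y : ℕ) : ℤ)) = F p q q r u u (x, y) := by
  rw [latticeTerm_eq p q q r u u _ ((x : ℕ) : ℝ) ((y : ℕ) : ℝ)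
    (((x : ℕ) : ℝ) + ((y : ℕ) : ℝ)) (((x : ℕ) : ℝ) + 2 * ((y : ℕ) : ℝ))
    (((x : ℕ) : ℝ) + 3 * ((y : ℕ) : ℝ)) (2 * ((x : ℕ) : ℝ) + 3 * ((y : ℕ) : ℝ))
    (by push_cast; ring) (by push_cast; ring) (by push_cast; ring) (by push_cast; ring)
    (by push_cast; ring) (by push_cast; ring)]
  rfl

lemma term1 (hpe : Even p) (x y : ℕ+) :
    latticeTerm p q q r u u (-((x : ℕ) : ℤ), ((x : ℕ) : ℤ) + ((y : ℕ) : ℤ)) =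
      F p q q r u u (x, y) := by
  rw [latticeTerm_eq p q q r u u _ (-((x : ℕ) : ℝ)) (((x : ℕ) : ℝ) + ((y : ℕ) : ℝ))
    ((y : ℕ) : ℝ) (((x : ℕ) : ℝ) + 2 * ((y : ℕ) : ℝ))
    (2 * ((x : ℕ) : ℝ) + 3 * ((y : ℕ) : ℝ)) (((x : ℕ) : ℝ) + 3 * ((y : ℕ) : ℝ))
    (by push_cast; ring) (by push_cast; ring) (by push_cast; ring) (by push_cast; ring)
    (by push_cast; ring) (by push_cast; ring), hpe.neg_pow]
  simp only [F]
  ring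

lemma term2 (hpe : Even p) (x y : ℕ+) :
    latticeTerm p q q r u u
      (-(((x : ℕ) : ℤ) + 3 * ((y : ℕ) : ℤ)), ((x : ℕ) : ℤ) + 2 * ((y : ℕ) : ℤ)) =
      (-1) ^ q * F u q r q p u (x, y) := by
  rw [latticeTerm_eq p q q r u u _ (-(((x : ℕ) : ℝ) + 3 * ((y : ℕ) : ℝ)))
    (((x : ℕ) : ℝ) + 2 * ((y : ℕ) : ℝ)) (-((y : ℕ) : ℝ)) (((x : ℕ) : ℝ) + ((y : ℕ) : ℝ))
    (2 * ((x : ℕ) : ℝ) + 3 * ((y : ℕ) : ℝ)) ((x : ℕ) : ℝ)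
    (by push_cast; ring) (by push_cast; ring) (by push_cast; ring) (by push_cast; ring)
    (by push_cast; ring) (by push_cast; ring), hpe.neg_pow]
  simp only [F]
  rcases Nat.even_or_odd q with h | h <;>
    simp only [h.neg_pow, h.neg_one_pow, one_pow, one_mul] <;> ring

lemma term3 (hpe : Even p) (x y : ℕ+) :
    latticeTerm p q q r u u
      (-(2 * ((x : ℕ) : ℤ) + 3 * ((y : ℕ) : ℤ)), ((x : ℕ) : ℤ) + 2 * ((y : ℕ) : ℤ)) =
      (-1) ^ (q + u) * F u r q q u p (x, y) := by
  rw [latticeTerm_eq p q q r u u _ (-(2 * ((x : ℕ) : ℝ) + 3 * ((y : ℕ) : ℝ)))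
    (((x : ℕ) : ℝ) + 2 * ((y : ℕ) : ℝ)) (-(((x : ℕ) : ℝ) + ((y : ℕ) : ℝ))) ((y : ℕ) : ℝ)
    (((x : ℕ) : ℝ) + 3 * ((y : ℕ) : ℝ)) (-((x : ℕ) : ℝ))
    (by push_cast; ring) (by push_cast; ring) (by push_cast; ring) (by push_cast; ring)
    (by push_cast; ring) (by push_cast; ring), hpe.neg_pow]
  simp only [F]
  rcases Nat.even_or_odd q with h | h <;> rcases Nat.even_or_odd u with h' | h' <;>
    simp only [pow_add, h.neg_pow, h.neg_one_pow, h'.neg_pow, h'.neg_one_pow, one_pow,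
      one_mul] <;> ring

lemma term4 (hpe : Even p) (hro : Odd r) (x y : ℕ+) :
    latticeTerm p q q r u u
      (-(2 * ((x : ℕ) : ℤ) + 3 * ((y : ℕ) : ℤ)), ((x : ℕ) : ℤ) + ((y : ℕ) : ℤ)) =
      -((-1) ^ (q + u) * F u r q q u p (x, y)) := by
  rw [latticeTerm_eq p q q r u u _ (-(2 * ((x : ℕ) : ℝ) + 3 * ((y : ℕ) : ℝ)))
    (((x : ℕ) : ℝ) + ((y : ℕ) : ℝ)) (-(((x : ℕ) : ℝ) + 2 * ((y : ℕ) : ℝ))) (-((y : ℕ) : ℝ))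
    ((x : ℕ) : ℝ) (-(((x : ℕ) : ℝ) + 3 * ((y : ℕ) : ℝ)))
    (by push_cast; ring) (by push_cast; ring) (by push_cast; ring) (by push_cast; ring)
    (by push_cast; ring) (by push_cast; ring), hpe.neg_pow, hro.neg_pow]
  simp only [F]
  rcases Nat.even_or_odd q with h | h <;> rcases Nat.even_or_odd u with h' | h' <;>
    simp only [pow_add, h.neg_pow, h.neg_one_pow, h'.neg_pow, h'.neg_one_pow, one_pow,
      one_mul] <;> ring

lemma term5 (hpe : Even p) (hro : Odd r) (x y : ℕ+) :
    latticeTerm p q q r u u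
      (-(((x : ℕ) : ℤ) + 3 * ((y : ℕ) : ℤ)), ((y : ℕ) : ℤ)) =
      -((-1) ^ q * F u q r q p u (x, y)) := by
  rw [latticeTerm_eq p q q r u u _ (-(((x : ℕ) : ℝ) + 3 * ((y : ℕ) : ℝ))) ((y : ℕ) : ℝ)
    (-(((x : ℕ) : ℝ) + 2 * ((y : ℕ) : ℝ))) (-(((x : ℕ) : ℝ) + ((y : ℕ) : ℝ)))
    (-((x : ℕ) : ℝ)) (-(2 * ((x : ℕ) : ℝ) + 3 * ((y : ℕ) : ℝ)))
    (by push_cast; ring) (by push_cast; ring) (by push_cast; ring) (by push_cast; ring)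
    (by push_cast; ring) (by push_cast; ring), hpe.neg_pow, hro.neg_pow]
  simp only [F]
  rcases Nat.even_or_odd q with h | h <;> rcases Nat.even_or_odd u with h' | h' <;>
    simp only [h.neg_pow, h.neg_one_pow, h'.neg_pow, h'.neg_one_pow, one_pow,
      one_mul] <;> ring

end Terms

end G2Aux

open G2Aux in
theorem latticeSum_eq_two_zetaG2 (p q r u : ℕ) (hp : 2 ≤ p) (hq : 2 ≤ q) (hr : 2 ≤ r)
    (hu : 2 ≤ u) (hpeven : Even p) (hrodd : Odd r) :
    Summable (fun x : {x : ℤ × ℤ // latticeCondN x} => latticeTerm p q q r u u x.1) ∧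
      ∑' x : {x : ℤ × ℤ // latticeCondN x}, latticeTerm p q q r u u x.1 =
        2 * zetaG2 p q q r u u := by
  have hZ1 := (summable_F p q q r u u hp hq).hasSum
  have hZ2 := (summable_F u q r q p u hu hq).hasSum
  have hZ3 := (summable_F u r q q u p hu hr).hasSum
  set Z1 := ∑' z, F p q q r u u z with hZ1def
  set Z2 := ∑' z, F u q r q p u z with hZ2def
  set Z3 := ∑' z, F u r q q u p z with hZ3def
  have hfun : (fun w => latticeTerm p q q r u u (phi w)) =
      Sum.elim (F p q q r u u) (Sum.elim (F p q q r u u)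
        (Sum.elim (fun z => (-1) ^ q * F u q r q p u z)
          (Sum.elim (fun z => (-1) ^ (q + u) * F u r q q u p z)
            (Sum.elim (fun z => -((-1) ^ (q + u) * F u r q q u p z))
              (fun z => -((-1) ^ q * F u q r q p u z)))))) := by
    funext w
    rcases w with z | z | z | z | z | z
    · exact term0 z.1 z.2
    · exact term1 hpeven z.1 z.2
    · exact term2 hpeven z.1 z.2
    · exact term3 hpeven z.1 z.2
    · exact term4 hpeven hrodd z.1 z.2
    · exact term5 hpeven hrodd z.1 z.2
  have htot : HasSum (fun w => latticeTerm p q q r u u (phi w))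
      (Z1 + (Z1 + ((-1) ^ q * Z2 + ((-1) ^ (q + u) * Z3 +
        (-((-1) ^ (q + u) * Z3) + -((-1) ^ q * Z2)))))) := by
    rw [hfun]
    exact hasSum_sumElim hZ1 (hasSum_sumElim hZ1 (hasSum_sumElim (hZ2.mul_left _)
      (hasSum_sumElim (hZ3.mul_left _) (hasSum_sumElim ((hZ3.mul_left ((-1) ^ (q + u))).neg)
        ((hZ2.mul_left ((-1) ^ q)).neg)))))
  let e : Idx ≃ {x : ℤ × ℤ // latticeCondN x} := Equiv.ofBijective Phi ⟨Phi_inj, Phi_surj⟩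
  have htot2 : HasSum ((fun t : {x : ℤ × ℤ // latticeCondN x} =>
      latticeTerm p q q r u u t.1) ∘ e)
      (Z1 + (Z1 + ((-1) ^ q * Z2 + ((-1) ^ (q + u) * Z3 +
        (-((-1) ^ (q + u) * Z3) + -((-1) ^ q * Z2)))))) := htot
  have htot3 := (Equiv.hasSum_iff e).mp htot2
  have hval : (Z1 + (Z1 + ((-1) ^ q * Z2 + ((-1) ^ (q + u) * Z3 +
      (-((-1) ^ (q + u) * Z3) + -((-1) ^ q * Z2)))))) = 2 * zetaG2 p q q r u u := by
    rw [zeta_eq p q q r u u hp hq, ← hZ1def]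
    ring
  rw [hval] at htot3
  exact ⟨htot3.summable, htot3.tsum_eq⟩
end

section
/- Let p, q, r, u be integers with p, q, r, u ≥ 2, q even and u odd. Then the lattice sum S = ∑ 1/(m^p · n^q · (m+n)^r · (m+2n)^r · (m+3n)^p · (2m+3n)^u), taken over all pairs (m, n) with m ≥ 1 an integer and n a nonzero integer such that m+n ≠ 0, m+2n ≠ 0, m+3n ≠ 0 and 2m+3n ≠ 0, converges and equals 2·ζ₂(p,q,r,r,p,u; G₂). -/
set_option maxHeartbeats 2000000


/-- The index set of the lattice sum: `m ≥ 1`, `n ≠ 0`, `m+n ≠ 0`, `m+2n ≠ 0`, `m+3n ≠ 0`,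
`2m+3n ≠ 0`. -/
def latticeCondM (x : ℤ × ℤ) : Prop :=
  1 ≤ x.1 ∧ x.2 ≠ 0 ∧ x.1 + x.2 ≠ 0 ∧ x.1 + 2 * x.2 ≠ 0 ∧ x.1 + 3 * x.2 ≠ 0 ∧
    2 * x.1 + 3 * x.2 ≠ 0

namespace G2Aux

open Set Function

/-- The `ℕ+ × ℕ+`-indexed summand of `zetaG2 p q r r p u`. -/
noncomputable def Z (p q r u : ℕ) (x : ℕ+ × ℕ+) : ℝ :=
  1 / (((x.1 : ℕ) : ℝ) ^ p * ((x.2 : ℕ) : ℝ) ^ q * (((x.1 : ℕ) : ℝ) + ((x.2 : ℕ) : ℝ)) ^ r *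
      (((x.1 : ℕ) : ℝ) + 2 * ((x.2 : ℕ) : ℝ)) ^ r *
      (((x.1 : ℕ) : ℝ) + 3 * ((x.2 : ℕ) : ℝ)) ^ p *
      (2 * ((x.1 : ℕ) : ℝ) + 3 * ((x.2 : ℕ) : ℝ)) ^ u)

lemma sq_sq_le {p q r u : ℕ} (hp : 2 ≤ p) (hq : 2 ≤ q) (a b c d e g : ℝ)
    (ha : 1 ≤ a) (hb : 1 ≤ b) (hc : 1 ≤ c) (hd : 1 ≤ d) (he : 1 ≤ e) (hg : 1 ≤ g) :
    a ^ 2 * b ^ 2 ≤ a ^ p * b ^ q * c ^ r * d ^ r * e ^ p * g ^ u := by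
  have ha0 : (0:ℝ) < a := lt_of_lt_of_le one_pos ha
  have hb0 : (0:ℝ) < b := lt_of_lt_of_le one_pos hb
  have h1 : a ^ 2 ≤ a ^ p := pow_le_pow_right₀ ha hp
  have h2 : b ^ 2 ≤ b ^ q := pow_le_pow_right₀ hb hq
  have step : a ^ 2 * b ^ 2 ≤ a ^ p * b ^ q :=
    mul_le_mul h1 h2 (by positivity) (by positivity)
  have pos1 : (0:ℝ) < a ^ p * b ^ q := by positivity
  calc a ^ 2 * b ^ 2 ≤ a ^ p * b ^ q := step
    _ ≤ a ^ p * b ^ q * c ^ r := le_mul_of_one_le_right (le_of_lt pos1) (one_le_pow₀ hc)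
    _ ≤ a ^ p * b ^ q * c ^ r * d ^ r :=
        le_mul_of_one_le_right (by positivity) (one_le_pow₀ hd)
    _ ≤ a ^ p * b ^ q * c ^ r * d ^ r * e ^ p :=
        le_mul_of_one_le_right (by positivity) (one_le_pow₀ he)
    _ ≤ a ^ p * b ^ q * c ^ r * d ^ r * e ^ p * g ^ u :=
        le_mul_of_one_le_right (by positivity) (one_le_pow₀ hg)

lemma summable_pnat_sq : Summable (fun n : ℕ+ => 1 / ((n : ℕ) : ℝ) ^ 2) :=
  (Real.summable_one_div_nat_pow.mpr one_lt_two).comp_injective PNat.coe_injective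

lemma summable_Z (p q r u : ℕ) (hp : 2 ≤ p) (hq : 2 ≤ q) : Summable (Z p q r u) := by
  have hnn : (0 : ℕ+ → ℝ) ≤ fun n : ℕ+ => 1 / ((n : ℕ) : ℝ) ^ 2 := by
    intro n
    positivity
  have hbig : Summable (fun x : ℕ+ × ℕ+ => 1 / ((x.1 : ℕ) : ℝ) ^ 2 * (1 / ((x.2 : ℕ) : ℝ) ^ 2)) :=
    summable_pnat_sq.mul_of_nonneg summable_pnat_sq hnn hnn
  refine Summable.of_nonneg_of_le (fun x => ?_) (fun x => ?_) hbig
  · unfold Z; positivity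
  · have hM1 : (1:ℝ) ≤ ((x.1 : ℕ) : ℝ) := by exact_mod_cast x.1.one_le
    have hN1 : (1:ℝ) ≤ ((x.2 : ℕ) : ℝ) := by exact_mod_cast x.2.one_le
    set M := ((x.1 : ℕ) : ℝ)
    set N := ((x.2 : ℕ) : ℝ)
    have key : M ^ 2 * N ^ 2 ≤
        M ^ p * N ^ q * (M + N) ^ r * (M + 2 * N) ^ r * (M + 3 * N) ^ p * (2 * M + 3 * N) ^ u :=
      sq_sq_le hp hq M N (M + N) (M + 2 * N) (M + 3 * N) (2 * M + 3 * N) hM1 hN1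
        (by linarith) (by linarith) (by linarith) (by linarith)
    have hpos : (0:ℝ) < M ^ 2 * N ^ 2 := by positivity
    calc Z p q r u x ≤ 1 / (M ^ 2 * N ^ 2) := by
          unfold Z
          exact one_div_le_one_div_of_le hpos key
      _ = 1 / M ^ 2 * (1 / N ^ 2) := by rw [div_mul_div_comm, one_mul]

lemma zeta_eq_s1 (p q r u : ℕ) (hp : 2 ≤ p) (hq : 2 ≤ q) :
    zetaG2 p q r r p u = ∑' x : ℕ+ × ℕ+, Z p q r u x := by
  exact (Summable.tsum_prod' (summable_Z p q r u hp hq)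
    (fun m => (summable_Z p q r u hp hq).prod_factor m)).symm

lemma one_div_neg_pow (p q r u : ℕ) (hu : Odd u) (a₁ a₂ a₃ a₄ a₅ a₆ : ℝ) :
    1 / ((-a₅) ^ p * a₂ ^ q * (-a₄) ^ r * (-a₃) ^ r * (-a₁) ^ p * (-a₆) ^ u) =
      -(1 / (a₁ ^ p * a₂ ^ q * a₃ ^ r * a₄ ^ r * a₅ ^ p * a₆ ^ u)) := by
  have h5 : (-a₅) ^ p * (-a₁) ^ p = a₅ ^ p * a₁ ^ p := by
    rw [← mul_pow, ← mul_pow, neg_mul_neg]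
  have h34 : (-a₄) ^ r * (-a₃) ^ r = a₄ ^ r * a₃ ^ r := by
    rw [← mul_pow, ← mul_pow, neg_mul_neg]
  have hD : (-a₅) ^ p * a₂ ^ q * (-a₄) ^ r * (-a₃) ^ r * (-a₁) ^ p * (-a₆) ^ u
      = -(a₁ ^ p * a₂ ^ q * a₃ ^ r * a₄ ^ r * a₅ ^ p * a₆ ^ u) := by
    calc (-a₅) ^ p * a₂ ^ q * (-a₄) ^ r * (-a₃) ^ r * (-a₁) ^ p * (-a₆) ^ u
        = ((-a₅) ^ p * (-a₁) ^ p) * ((-a₄) ^ r * (-a₃) ^ r) * a₂ ^ q * (-a₆) ^ u := by ring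
      _ = (a₅ ^ p * a₁ ^ p) * (a₄ ^ r * a₃ ^ r) * a₂ ^ q * (-(a₆ ^ u)) := by
          rw [h5, h34, hu.neg_pow]
      _ = -(a₁ ^ p * a₂ ^ q * a₃ ^ r * a₄ ^ r * a₅ ^ p * a₆ ^ u) := by ring
  rw [hD, div_neg]

lemma one_le_abs_cast {z : ℤ} (hz : z ≠ 0) : (1:ℝ) ≤ |(z : ℝ)| := by
  have := Int.one_le_abs hz
  exact_mod_cast this

lemma abs_latticeTerm_le (p q r u : ℕ) (hp : 2 ≤ p) (hq : 2 ≤ q) (x : ℤ × ℤ)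
    (h : latticeCondM x) :
    |latticeTerm p q r r p u x| ≤ 1 / ((x.1 : ℝ)) ^ 2 * (1 / ((x.2 : ℝ)) ^ 2) := by
  obtain ⟨h1, h2, h3, h4, h5, h6⟩ := h
  have c1 : (1:ℝ) ≤ |(x.1 : ℝ)| := one_le_abs_cast (by omega)
  have c2 : (1:ℝ) ≤ |(x.2 : ℝ)| := one_le_abs_cast h2
  have c3 : (1:ℝ) ≤ |(x.1 : ℝ) + (x.2 : ℝ)| := by
    have e : ((x.1 + x.2 : ℤ) : ℝ) = (x.1 : ℝ) + (x.2 : ℝ) := by push_cast; ring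
    rw [← e]; exact one_le_abs_cast h3
  have c4 : (1:ℝ) ≤ |(x.1 : ℝ) + 2 * (x.2 : ℝ)| := by
    have e : ((x.1 + 2 * x.2 : ℤ) : ℝ) = (x.1 : ℝ) + 2 * (x.2 : ℝ) := by push_cast; ring
    rw [← e]; exact one_le_abs_cast h4
  have c5 : (1:ℝ) ≤ |(x.1 : ℝ) + 3 * (x.2 : ℝ)| := by
    have e : ((x.1 + 3 * x.2 : ℤ) : ℝ) = (x.1 : ℝ) + 3 * (x.2 : ℝ) := by push_cast; ring
    rw [← e]; exact one_le_abs_cast h5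
  have c6 : (1:ℝ) ≤ |2 * (x.1 : ℝ) + 3 * (x.2 : ℝ)| := by
    have e : ((2 * x.1 + 3 * x.2 : ℤ) : ℝ) = 2 * (x.1 : ℝ) + 3 * (x.2 : ℝ) := by push_cast; ring
    rw [← e]; exact one_le_abs_cast h6
  rw [latticeTerm, abs_div, abs_one, abs_mul, abs_mul, abs_mul, abs_mul, abs_mul,
    abs_pow, abs_pow, abs_pow, abs_pow, abs_pow, abs_pow]
  have hswap : 1 / ((x.1 : ℝ)) ^ 2 * (1 / ((x.2 : ℝ)) ^ 2)
      = 1 / (|(x.1 : ℝ)| ^ 2 * |(x.2 : ℝ)| ^ 2) := by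
    rw [div_mul_div_comm, one_mul, sq_abs, sq_abs]
  rw [hswap]
  apply one_div_le_one_div_of_le
  · have h01 : (0:ℝ) < |(x.1 : ℝ)| := lt_of_lt_of_le one_pos c1
    have h02 : (0:ℝ) < |(x.2 : ℝ)| := lt_of_lt_of_le one_pos c2
    positivity
  · exact sq_sq_le hp hq _ _ _ _ _ _ c1 c2 c3 c4 c5 c6

end G2Aux

open Set Function G2Aux in
theorem latticeSum_eq_two_zetaG2' (p q r u : ℕ) (hp : 2 ≤ p) (hq : 2 ≤ q) (hr : 2 ≤ r)
    (hu : 2 ≤ u) (hqeven : Even q) (huodd : Odd u) :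
    Summable (fun x : {x : ℤ × ℤ // latticeCondM x} => latticeTerm p q r r p u x.1) ∧
      ∑' x : {x : ℤ × ℤ // latticeCondM x}, latticeTerm p q r r p u x.1 =
        2 * zetaG2 p q r r p u := by
  classical
  set f : ℤ × ℤ → ℝ := latticeTerm p q r r p u with hfdef
  set I : Set (ℤ × ℤ) := {x | latticeCondM x} with hIdef
  set A : Set (ℤ × ℤ) := {x | 1 ≤ x.1 ∧ 1 ≤ x.2} with hAdef
  set B : Set (ℤ × ℤ) := {x | x.2 ≤ -1 ∧ 1 ≤ x.1 + 3 * x.2} with hBdef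
  set C : Set (ℤ × ℤ) := {x | latticeCondM x ∧ x.2 ≤ -1 ∧ x.1 + 3 * x.2 ≤ -1} with hCdef
  have memI : ∀ x : ℤ × ℤ, x ∈ I ↔ latticeCondM x := fun x => Iff.rfl
  have memA : ∀ x : ℤ × ℤ, x ∈ A ↔ (1 ≤ x.1 ∧ 1 ≤ x.2) := fun x => Iff.rfl
  have memB : ∀ x : ℤ × ℤ, x ∈ B ↔ (x.2 ≤ -1 ∧ 1 ≤ x.1 + 3 * x.2) := fun x => Iff.rfl
  have memC : ∀ x : ℤ × ℤ, x ∈ C ↔ (latticeCondM x ∧ x.2 ≤ -1 ∧ x.1 + 3 * x.2 ≤ -1) :=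
    fun x => Iff.rfl
  -- basic set facts
  have hIunion : I = A ∪ (B ∪ C) := by
    ext x
    simp only [memI, memA, memB, memC, Set.mem_union, latticeCondM]
    omega
  have hABC : Disjoint A (B ∪ C) := by
    rw [Set.disjoint_left]
    intro x hxA hxBC
    rcases hxBC with hxB | hxC
    · rw [memA] at hxA; rw [memB] at hxB; omega
    · rw [memA] at hxA; rw [memC] at hxC; unfold latticeCondM at hxC; omega
  have hBC : Disjoint B C := by
    rw [Set.disjoint_left]
    intro x hxB hxC
    rw [memB] at hxB; rw [memC] at hxC; omega
  have hAsub : A ⊆ I := by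
    intro x hx; rw [memA] at hx; rw [memI]; unfold latticeCondM; omega
  have hBsub : B ⊆ I := by
    intro x hx; rw [memB] at hx; rw [memI]; unfold latticeCondM; omega
  have hCsub : C ⊆ I := by
    intro x hx; rw [memC] at hx; exact hx.1
  -- summability of the indicator function
  have hg2 : Summable (fun k : ℤ => 1 / (k : ℝ) ^ 2) :=
    Real.summable_one_div_int_pow.mpr one_lt_two
  have hg2nn : (0 : ℤ → ℝ) ≤ fun k : ℤ => 1 / (k : ℝ) ^ 2 := by
    intro k
    positivity
  have hG : Summable (fun x : ℤ × ℤ => 1 / (x.1 : ℝ) ^ 2 * (1 / (x.2 : ℝ) ^ 2)) :=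
    hg2.mul_of_nonneg hg2 hg2nn hg2nn
  have hFabs : Summable (fun x => |I.indicator f x|) := by
    refine Summable.of_nonneg_of_le (fun x => abs_nonneg _) (fun x => ?_) hG
    by_cases hx : x ∈ I
    · rw [Set.indicator_of_mem hx]
      exact abs_latticeTerm_le p q r u hp hq x ((memI x).mp hx)
    · rw [Set.indicator_of_notMem hx, abs_zero]
      positivity
  have hF : Summable (I.indicator f) := summable_abs_iff.mp hFabs
  -- pieces are summable
  have hSA : Summable (A.indicator f) := by
    have := hF.indicator A
    rwa [Set.indicator_indicator, Set.inter_eq_left.mpr hAsub] at this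
  have hSB : Summable (B.indicator f) := by
    have := hF.indicator B
    rwa [Set.indicator_indicator, Set.inter_eq_left.mpr hBsub] at this
  have hSC : Summable (C.indicator f) := by
    have := hF.indicator C
    rwa [Set.indicator_indicator, Set.inter_eq_left.mpr hCsub] at this
  -- the splitting of the indicator
  have hindic : I.indicator f = A.indicator f + (B.indicator f + C.indicator f) := by
    rw [hIunion, Set.indicator_union_of_disjoint hABC, Set.indicator_union_of_disjoint hBC]
    rfl
  -- piece A
  have pieceA : ∑' x, A.indicator f x = ∑' y : ℕ+ × ℕ+, Z p q r u y := by
    set e₁ : ℕ+ × ℕ+ → ℤ × ℤ := fun y => (((y.1 : ℕ) : ℤ), ((y.2 : ℕ) : ℤ)) with he₁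
    have hinj : Injective e₁ := by
      intro y z h
      simp only [he₁, Prod.mk.injEq] at h
      rw [Prod.ext_iff]
      exact ⟨by exact_mod_cast h.1, by exact_mod_cast h.2⟩
    have hsupp : Function.support (A.indicator f) ⊆ Set.range e₁ := by
      intro x hx
      have hxA : x ∈ A := by
        by_contra h
        exact hx (Set.indicator_of_notMem h f)
      rw [memA] at hxA
      refine ⟨(⟨x.1.toNat, by omega⟩, ⟨x.2.toNat, by omega⟩), ?_⟩
      rw [Prod.ext_iff]
      constructor
      · simpa [he₁] using Int.toNat_of_nonneg (by omega : (0:ℤ) ≤ x.1)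
      · simpa [he₁] using Int.toNat_of_nonneg (by omega : (0:ℤ) ≤ x.2)
    have heval : ∀ y : ℕ+ × ℕ+, A.indicator f (e₁ y) = Z p q r u y := by
      intro y
      have hmem : e₁ y ∈ A := by
        rw [memA]
        simp only [he₁]
        constructor
        · exact_mod_cast y.1.one_le
        · exact_mod_cast y.2.one_le
      rw [Set.indicator_of_mem hmem, hfdef]
      show latticeTerm p q r r p u (((y.1 : ℕ) : ℤ), ((y.2 : ℕ) : ℤ)) = Z p q r u y
      unfold latticeTerm Z
      push_cast
      ring
    calc ∑' x, A.indicator f x = ∑' y, A.indicator f (e₁ y) := (hinj.tsum_eq hsupp).symm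
      _ = ∑' y, Z p q r u y := tsum_congr heval
  -- piece B
  have pieceB : ∑' x, B.indicator f x = ∑' y : ℕ+ × ℕ+, Z p q r u y := by
    set e₂ : ℕ+ × ℕ+ → ℤ × ℤ :=
      fun y => (((y.1 : ℕ) : ℤ) + 3 * ((y.2 : ℕ) : ℤ), -((y.2 : ℕ) : ℤ)) with he₂
    have hinj : Injective e₂ := by
      intro y z h
      simp only [he₂, Prod.mk.injEq] at h
      obtain ⟨ha, hb⟩ := h
      have hb' : ((y.2 : ℕ) : ℤ) = ((z.2 : ℕ) : ℤ) := by omega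
      have ha' : ((y.1 : ℕ) : ℤ) = ((z.1 : ℕ) : ℤ) := by omega
      rw [Prod.ext_iff]
      exact ⟨by exact_mod_cast ha', by exact_mod_cast hb'⟩
    have hsupp : Function.support (B.indicator f) ⊆ Set.range e₂ := by
      intro x hx
      have hxB : x ∈ B := by
        by_contra h
        exact hx (Set.indicator_of_notMem h f)
      rw [memB] at hxB
      refine ⟨(⟨(x.1 + 3 * x.2).toNat, by omega⟩, ⟨(-x.2).toNat, by omega⟩), ?_⟩
      rw [Prod.ext_iff]
      have t1 : (((x.1 + 3 * x.2).toNat : ℤ)) = x.1 + 3 * x.2 :=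
        Int.toNat_of_nonneg (by omega)
      have t2 : (((-x.2).toNat : ℤ)) = -x.2 := Int.toNat_of_nonneg (by omega)
      constructor
      · simp only [he₂, PNat.mk_ofNat, PNat.mk_coe]
        show ((x.1 + 3 * x.2).toNat : ℤ) + 3 * ((-x.2).toNat : ℤ) = x.1
        omega
      · show -(((-x.2).toNat : ℤ)) = x.2
        omega
    have heval : ∀ y : ℕ+ × ℕ+, B.indicator f (e₂ y) = Z p q r u y := by
      intro y
      have hy1 : 1 ≤ ((y.1 : ℕ) : ℤ) := by exact_mod_cast y.1.one_le
      have hy2 : 1 ≤ ((y.2 : ℕ) : ℤ) := by exact_mod_cast y.2.one_le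
      have hmem : e₂ y ∈ B := by
        rw [memB]
        simp only [he₂]
        constructor
        · show -((y.2 : ℕ) : ℤ) ≤ -1; omega
        · show 1 ≤ ((y.1 : ℕ) : ℤ) + 3 * ((y.2 : ℕ) : ℤ) + 3 * (-((y.2 : ℕ) : ℤ)); omega
      rw [Set.indicator_of_mem hmem, hfdef]
      show latticeTerm p q r r p u
        (((y.1 : ℕ) : ℤ) + 3 * ((y.2 : ℕ) : ℤ), -((y.2 : ℕ) : ℤ)) = Z p q r u y
      unfold latticeTerm Z
      push_cast
      rw [show (-((y.2 : ℕ) : ℝ)) ^ q = ((y.2 : ℕ) : ℝ) ^ q from hqeven.neg_pow _]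
      ring
    calc ∑' x, B.indicator f x = ∑' y, B.indicator f (e₂ y) := (hinj.tsum_eq hsupp).symm
      _ = ∑' y, Z p q r u y := tsum_congr heval
  -- piece C: vanishes by the sign-flipping involution
  have pieceC : ∑' x, C.indicator f x = 0 := by
    have hσinv : Function.Involutive (fun x : ℤ × ℤ => (-x.1 - 3 * x.2, x.2)) := by
      intro x
      show (-(-x.1 - 3 * x.2) - 3 * x.2, x.2) = x
      rw [Prod.ext_iff]
      constructor
      · show -(-x.1 - 3 * x.2) - 3 * x.2 = x.1; ring
      · rfl
    set σ : ℤ × ℤ → ℤ × ℤ := fun x => (-x.1 - 3 * x.2, x.2) with hσdef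
    have hCmap : ∀ x ∈ C, σ x ∈ C := by
      intro x hx
      rw [memC] at hx ⊢
      unfold latticeCondM at hx ⊢
      simp only [hσdef]
      omega
    have hfneg : ∀ x : ℤ × ℤ, f (σ x) = -f x := by
      intro x
      rw [hfdef]
      show latticeTerm p q r r p u (-x.1 - 3 * x.2, x.2) = -latticeTerm p q r r p u x
      have key := one_div_neg_pow p q r u huodd ((x.1 : ℝ)) ((x.2 : ℝ))
        ((x.1 : ℝ) + (x.2 : ℝ)) ((x.1 : ℝ) + 2 * (x.2 : ℝ)) ((x.1 : ℝ) + 3 * (x.2 : ℝ))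
        (2 * (x.1 : ℝ) + 3 * (x.2 : ℝ))
      unfold latticeTerm
      rw [← key]
      push_cast
      ring_nf
    have hcomp : ∀ x : ℤ × ℤ, C.indicator f (σ x) = -C.indicator f x := by
      intro x
      by_cases hx : x ∈ C
      · rw [Set.indicator_of_mem (hCmap x hx), Set.indicator_of_mem hx, hfneg]
      · have hσx : σ x ∉ C := by
          intro h
          have := hCmap _ h
          rw [show σ (σ x) = x from hσinv x] at this
          exact hx this
        rw [Set.indicator_of_notMem hσx, Set.indicator_of_notMem hx, neg_zero]
    set E : Equiv.Perm (ℤ × ℤ) := hσinv.toPerm _ with hEdef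
    have hE : ∀ x, E x = σ x := fun x => rfl
    have h1 : ∑' x, C.indicator f (E x) = ∑' x, C.indicator f x :=
      E.tsum_eq (C.indicator f)
    have h2 : ∑' x, C.indicator f (E x) = -∑' x, C.indicator f x := by
      rw [show (fun x => C.indicator f (E x)) = fun x => -C.indicator f x from
        funext fun x => by rw [hE, hcomp], tsum_neg]
    have := h1.symm.trans h2
    linarith
  -- assemble
  have hsubSummable : Summable (fun x : {x : ℤ × ℤ // latticeCondM x} => f x.1) := by
    have := (summable_subtype_iff_indicator (s := I) (f := f)).mpr hF
    exact this
  refine ⟨hsubSummable, ?_⟩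
  have htsub : ∑' x : {x : ℤ × ℤ // latticeCondM x}, f x.1 = ∑' x, I.indicator f x :=
    tsum_subtype I f
  rw [htsub, hindic]
  simp only [Pi.add_apply]
  rw [Summable.tsum_add hSA (hSB.add hSC), Summable.tsum_add hSB hSC, pieceA, pieceB, pieceC,
    zeta_eq_s1 p q r u hp hq]
  ring
end

section
/- Let s be a complex number with Re s > 1, and let Σ₁₁ = ∑ 1/(m^{s+1} · n^3 · (m+n) · (m+2n)), the sum over all integers m ≥ 1 and nonzero integers n with m+n ≠ 0 and m+2n ≠ 0. Then Σ₁₁ = −π²·ζ(s+4) + (10 + 2^{−s−1})·ζ(s+6). -/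
open Filter Finset
lemma telescope (ψ : ℕ → ℝ) (d : ℕ) (h0 : Tendsto ψ atTop (nhds 0))
    (hs : Summable (fun n => ψ (n + d) - ψ n)) :
    HasSum (fun n => ψ (n + d) - ψ n) (-∑ j ∈ range d, ψ j) := by
  have key : ∀ N, ∑ n ∈ range N, (ψ (n + d) - ψ n)
      = (∑ j ∈ range d, ψ (N + j)) - ∑ j ∈ range d, ψ j := by
    intro N
    have h1 : ∑ n ∈ range (N + d), ψ n
        = ∑ n ∈ range N, ψ n + ∑ j ∈ range d, ψ (N + j) := Finset.sum_range_add ψ N d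
    have h2 : ∑ n ∈ range (d + N), ψ n
        = ∑ n ∈ range d, ψ n + ∑ j ∈ range N, ψ (d + j) := Finset.sum_range_add ψ d N
    have h3 : ∑ n ∈ range N, ψ (n + d) = ∑ n ∈ range N, ψ (d + n) := by
      refine Finset.sum_congr rfl fun n _ => by rw [add_comm]
    rw [Finset.sum_sub_distrib, h3]
    rw [add_comm N d] at h1
    rw [h1] at h2
    linarith [h2]
  have hlim : Tendsto (fun N => ∑ n ∈ range N, (ψ (n + d) - ψ n)) atTop
      (nhds (-∑ j ∈ range d, ψ j)) := by
    simp only [key]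
    have : Tendsto (fun N => ∑ j ∈ range d, ψ (N + j)) atTop (nhds 0) := by
      have := tendsto_finset_sum (range d)
        (fun j _ => h0.comp (tendsto_add_atTop_nat j))
      simpa using this.congr (fun N => by
        refine Finset.sum_congr rfl fun j _ => by simp [Function.comp, add_comm])
    simpa using this.sub tendsto_const_nhds
  have := hs.hasSum.tendsto_sum_nat
  have heq := tendsto_nhds_unique this hlim
  rw [← heq]
  exact hs.hasSum

lemma summable_sq_aux {f : ℕ → ℝ} (C : ℝ) (h : ∀ n, |f n| ≤ C / ((n : ℝ) + 1) ^ 2) :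
    Summable f := by
  have hC : Summable (fun n : ℕ => C / ((n : ℝ) + 1) ^ 2) := by
    have h2 : Summable (fun n : ℕ => 1 / ((n : ℝ) + 1) ^ 2) := by
      have := (Real.summable_one_div_nat_pow (p := 2)).mpr one_lt_two
      have := (summable_nat_add_iff 1).mpr this
      exact this.congr fun n => by push_cast; ring
    simpa [div_eq_mul_inv, mul_comm] using h2.mul_left C
  exact Summable.of_abs (hC.of_nonneg_of_le (fun n => abs_nonneg _) h)

lemma basel : HasSum (fun n : ℕ => 1 / ((n : ℝ) + 1) ^ 2) (Real.pi ^ 2 / 6) := by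
  have h := hasSum_zeta_two
  have h2 : HasSum (fun n : ℕ => (1 : ℝ) / ((n + 1 : ℕ) : ℝ) ^ 2)
      (Real.pi ^ 2 / 6 - ∑ i ∈ range 1, (1 : ℝ) / (i : ℝ) ^ 2) :=
    (hasSum_nat_add_iff' (f := fun n : ℕ => (1 : ℝ) / (n : ℝ) ^ 2) 1).mpr h
  simp only [Finset.sum_range_one, Nat.cast_zero] at h2
  norm_num at h2
  exact h2.congr fun n => by simp

lemma L2 (a : ℕ) (ha : 1 ≤ a) :
    HasSum (fun n : ℕ => 1 / ((a : ℝ) ^ 2 - ((n : ℝ) + 1) ^ 2)) (-3 / (4 * (a : ℝ) ^ 2)) := by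
  have ha0 : (0:ℝ) < a := by exact_mod_cast ha
  set f : ℕ → ℝ := fun n => 1 / ((a : ℝ) ^ 2 - ((n : ℝ) + 1) ^ 2) with hf
  set ψ : ℕ → ℝ := fun n => 1 / (2 * a * (((n : ℝ) + 1) - a)) with hψ
  set e : ℕ → ℝ := fun n => if n = a - 1 then -1 / (4 * (a:ℝ)^2) else 0 with he
  -- tendsto
  have hψ0 : Tendsto ψ atTop (nhds 0) := by
    have h1 : Tendsto (fun n : ℕ => 2 * (a:ℝ) * (((n:ℝ) + 1) - a)) atTop atTop := by
      apply Tendsto.const_mul_atTop (by positivity : (0:ℝ) < 2 * a)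
      have := tendsto_natCast_atTop_atTop (R := ℝ)
      have := tendsto_atTop_add_const_right atTop (1 - (a:ℝ)) this
      exact this.congr fun n => by ring
    have := h1.inv_tendsto_atTop
    exact this.congr fun n => by rw [hψ]; simp [one_div]
  -- summable f
  have hfs : Summable f := by
    apply (summable_nat_add_iff (2 * a)).mp
    apply summable_sq_aux 1
    intro n
    have hd : ((n:ℝ) + 1)^2 ≤ (((n + 2*a : ℕ):ℝ) + 1)^2 - (a:ℝ)^2 := by
      push_cast; nlinarith [Nat.cast_nonneg (α := ℝ) n]
    have hpos : (0:ℝ) < ((n:ℝ)+1)^2 := by positivity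
    have habs : |(a : ℝ)^2 - (((n + 2*a : ℕ):ℝ) + 1)^2| = (((n + 2*a : ℕ):ℝ) + 1)^2 - (a:ℝ)^2 := by
      rw [abs_sub_comm]; exact abs_of_nonneg (by nlinarith)
    rw [hf]
    simp only []
    rw [abs_div, abs_one, habs, one_div, one_div]
    exact inv_anti₀ hpos hd
  -- pointwise identity
  have hpt : ∀ n, f n = (ψ (n + 2*a) - ψ n) + e n := by
    intro n
    have hcast : ((n + 2*a : ℕ) : ℝ) = (n:ℝ) + 2*a := by push_cast; ring
    by_cases hn : n = a - 1
    · subst hn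
      have hc : ((a - 1 : ℕ) : ℝ) + 1 = (a:ℝ) := by
        have := Nat.sub_add_cancel ha
        exact_mod_cast congrArg (Nat.cast : ℕ → ℝ) this
      have hc' : ((a - 1 : ℕ) : ℝ) = (a:ℝ) - 1 := by linarith
      have hane : (a:ℝ) ≠ 0 := ne_of_gt ha0
      rw [hf, hψ, he]
      simp only [if_pos rfl, hcast, hc']
      rw [show (a:ℝ)^2 - ((a:ℝ)-1+1)^2 = 0 by ring, div_zero,
          show 2*(a:ℝ)*((a:ℝ)-1+1-(a:ℝ)) = 0 by ring, div_zero,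
          show 2*(a:ℝ)*((a:ℝ)-1+2*(a:ℝ)+1-(a:ℝ)) = 4*(a:ℝ)^2 by ring]
      norm_num
      field_simp
      ring
    · have hx : ((n:ℝ) + 1) - a ≠ 0 := by
        have : (n + 1 : ℕ) ≠ a := by omega
        intro hcon
        apply this
        have : ((n+1:ℕ):ℝ) = (a:ℝ) := by push_cast; linarith
        exact_mod_cast this
      have hxa : ((n:ℝ) + 1) + a ≠ 0 := by positivity
      have hane : (a:ℝ) ≠ 0 := ne_of_gt ha0
      rw [hf, hψ, he]
      simp only [if_neg hn, hcast, add_zero]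
      have hd2 : (a:ℝ)^2 - ((n:ℝ)+1)^2 ≠ 0 := by
        intro hcon
        apply hx
        nlinarith [sq_nonneg ((n:ℝ)+1-a), sq_nonneg ((n:ℝ)+1+a)]
      have h1 : 2*(a:ℝ)*((n:ℝ)+2*a+1-a) ≠ 0 := by
        apply mul_ne_zero (by positivity)
        have : (n:ℝ)+2*a+1-a = ((n:ℝ)+1)+a := by ring
        rw [this]; exact hxa
      have h2 : 2*(a:ℝ)*((n:ℝ)+1-a) ≠ 0 := by
        apply mul_ne_zero (by positivity)
        exact hx
      have h1' : (n:ℝ) + a*2 + 1 - a ≠ 0 := by contrapose! hxa; linarith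
      field_simp
      ring
  -- summable telescoped
  have hes : Summable e := summable_of_finite_support (by
    apply Set.Finite.subset (Set.finite_singleton (a-1))
    intro n hn
    simp only [Function.mem_support, he] at hn
    by_contra hne
    exact hn (if_neg (by simpa using hne)))
  have hts : Summable (fun n => ψ (n + 2*a) - ψ n) := by
    apply Summable.congr (hfs.sub hes)
    intro n
    rw [hpt n]; ring
  -- telescope value
  have htel := telescope ψ (2*a) hψ0 hts
  -- finite sum
  have hfin : ∑ j ∈ range (2*a), ψ j = 1 / (2 * (a:ℝ)^2) := by
    have h2a : 2*a = (2*a-1)+1 := by omega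
    rw [h2a, Finset.sum_range_succ]
    have hlast : ψ (2*a-1) = 1 / (2*(a:ℝ)^2) := by
      have hc : ((2*a - 1 : ℕ) : ℝ) + 1 = 2*(a:ℝ) := by
        have : (2*a - 1) + 1 = 2*a := by omega
        have := congrArg (Nat.cast : ℕ → ℝ) this
        push_cast at this; linarith
      rw [hψ]; simp only [hc]
      rw [show 2*(a:ℝ)*((2*(a:ℝ)) - a) = 2*(a:ℝ)^2 by ring]
    have hmain : ∑ j ∈ range (2*a-1), ψ j = 0 := by
      have hrefl := Finset.sum_range_reflect ψ (2*a-1)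
      have hneg : ∀ j ∈ range (2*a-1), ψ (2*a-1-1-j) = -ψ j := by
        intro j hj
        rw [Finset.mem_range] at hj
        have hc : ((2*a-1-1-j : ℕ) : ℝ) + 1 = 2*(a:ℝ) - 1 - j := by
          have h1 : (2*a-1-1-j) + 1 + j + 1 = 2*a := by omega
          have := congrArg (Nat.cast : ℕ → ℝ) h1
          push_cast at this; linarith
        rw [hψ]
        simp only [hc]
        rw [show 2*(a:ℝ)*((2*(a:ℝ)-1-j) - a) = -(2*(a:ℝ)*(((j:ℝ)+1) - a)) by ring]
        rw [div_neg]
      rw [Finset.sum_congr rfl hneg] at hrefl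
      rw [Finset.sum_neg_distrib] at hrefl
      linarith
    rw [hmain, hlast, zero_add]
  rw [hfin] at htel
  have hee : HasSum e (-1 / (4*(a:ℝ)^2)) := hasSum_ite_eq (a-1) _
  have := htel.add hee
  have hval : -(1 / (2 * (a:ℝ)^2)) + -1/(4*(a:ℝ)^2) = -3 / (4*(a:ℝ)^2) := by
    field_simp; ring
  rw [hval] at this
  have hfe : (fun n : ℕ => 1 / ((a:ℝ)^2 - ((n:ℝ)+1)^2)) = fun n => (ψ (n+2*a) - ψ n) + e n := by
    funext n; exact hpt n
  rw [hf, hfe]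
  exact this

lemma L3 (r : ℕ) :
    HasSum (fun n : ℕ => 2 * (2*(r:ℝ)+1) / ((2*(r:ℝ)+1)^2 - 4*((n:ℝ)+1)^2))
      (-1 / (2*(r:ℝ)+1)) := by
  set m : ℕ := 2*r+1 with hm
  have hmc : ((m:ℕ):ℝ) = 2*(r:ℝ)+1 := by push_cast [hm]; ring
  set ψ : ℕ → ℝ := fun n => 1 / (2*((n:ℝ)+1) - (2*(r:ℝ)+1)) with hψ
  have hψ0 : Tendsto ψ atTop (nhds 0) := by
    have h1 : Tendsto (fun n : ℕ => 2*((n:ℝ)+1) - (2*(r:ℝ)+1)) atTop atTop := by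
      have h0 := tendsto_natCast_atTop_atTop (R := ℝ)
      have h2 := h0.const_mul_atTop (show (0:ℝ) < 2 by norm_num)
      have h3 := tendsto_atTop_add_const_right atTop (2 - (2*(r:ℝ)+1)) h2
      exact h3.congr fun n => by ring
    exact h1.inv_tendsto_atTop.congr fun n => by rw [hψ]; simp [one_div]
  have hpt : ∀ n : ℕ, 2 * (2*(r:ℝ)+1) / ((2*(r:ℝ)+1)^2 - 4*((n:ℝ)+1)^2) = ψ (n + m) - ψ n := by
    intro n
    have hcast : ((n + m : ℕ) : ℝ) = (n:ℝ) + 2*r + 1 := by push_cast [hm]; ring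
    have h1 : 2*((n:ℝ)+1) + (2*(r:ℝ)+1) ≠ 0 := by positivity
    have h2 : 2*((n:ℝ)+1) - (2*(r:ℝ)+1) ≠ 0 := by
      have hne : 2*(n+1) ≠ m := by omega
      intro hcon
      apply hne
      have : (2*(n+1) : ℕ) = ((m:ℕ):ℝ) := by push_cast [hmc]; linarith
      exact_mod_cast this
    have hd : (2*(r:ℝ)+1)^2 - 4*((n:ℝ)+1)^2 ≠ 0 := by
      intro hcon; apply h2; nlinarith [sq_nonneg (2*((n:ℝ)+1) - (2*(r:ℝ)+1))]
    rw [hψ]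
    simp only [hcast]
    rw [show 2*((n:ℝ)+2*r+1+1) - (2*(r:ℝ)+1) = 2*((n:ℝ)+1) + (2*(r:ℝ)+1) by ring]
    field_simp
    ring
  have hsum : Summable (fun n : ℕ => 2 * (2*(r:ℝ)+1) / ((2*(r:ℝ)+1)^2 - 4*((n:ℝ)+1)^2)) := by
    apply (summable_nat_add_iff m).mp
    apply summable_sq_aux (2*(2*(r:ℝ)+1))
    intro n
    have hxc : ((n + m : ℕ):ℝ) = (n:ℝ) + 2*r + 1 := by push_cast [hm]; ring
    have hdpos : ((n:ℝ)+1)^2 ≤ 4*(((n + m:ℕ):ℝ)+1)^2 - (2*(r:ℝ)+1)^2 := by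
      rw [hxc]; nlinarith [Nat.cast_nonneg (α := ℝ) n, Nat.cast_nonneg (α := ℝ) r]
    have habs : |(2*(r:ℝ)+1)^2 - 4*(((n + m:ℕ):ℝ)+1)^2|
        = 4*(((n + m:ℕ):ℝ)+1)^2 - (2*(r:ℝ)+1)^2 := by
      rw [abs_sub_comm]
      exact abs_of_nonneg (by nlinarith [sq_nonneg ((n:ℝ)+1)])
    rw [abs_div, habs, abs_of_nonneg (by positivity : (0:ℝ) ≤ 2*(2*(r:ℝ)+1))]
    apply div_le_div_of_nonneg_left ?_ (by positivity) ?_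
    · positivity
    · nlinarith [sq_nonneg ((n:ℝ)+1)]
  have hts : Summable (fun n => ψ (n + m) - ψ n) := hsum.congr hpt
  have htel := telescope ψ m hψ0 hts
  have hfin : ∑ j ∈ range m, ψ j = 1 / (2*(r:ℝ)+1) := by
    rw [hm, Finset.sum_range_succ]
    have hlast : ψ (2*r) = 1 / (2*(r:ℝ)+1) := by
      rw [hψ]; push_cast
      rw [show 2*(2*(r:ℝ)+1) - (2*(r:ℝ)+1) = 2*(r:ℝ)+1 by ring]
    have hmain : ∑ j ∈ range (2*r), ψ j = 0 := by
      have hrefl := Finset.sum_range_reflect ψ (2*r)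
      have hneg : ∀ j ∈ range (2*r), ψ (2*r-1-j) = -ψ j := by
        intro j hj
        rw [Finset.mem_range] at hj
        have hc : ((2*r-1-j : ℕ) : ℝ) = 2*(r:ℝ) - 1 - j := by
          have h1 : (2*r-1-j) + 1 + j = 2*r := by omega
          have := congrArg (Nat.cast : ℕ → ℝ) h1
          push_cast at this; linarith
        rw [hψ]
        simp only [hc]
        rw [show 2*((2*(r:ℝ)-1-j)+1) - (2*(r:ℝ)+1) = -(2*((j:ℝ)+1) - (2*(r:ℝ)+1)) by ring]
        rw [div_neg]
      rw [Finset.sum_congr rfl hneg, Finset.sum_neg_distrib] at hrefl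
      linarith
    rw [hmain, hlast, zero_add]
  rw [hfin] at htel
  rw [show (fun n : ℕ => 2 * (2*(r:ℝ)+1) / ((2*(r:ℝ)+1)^2 - 4*((n:ℝ)+1)^2))
      = fun n => ψ (n + m) - ψ n from funext hpt]
  rw [show -1 / (2*(r:ℝ)+1) = -(1 / (2*(r:ℝ)+1)) by ring]
  exact htel

lemma int_hasSum {f : ℤ → ℝ} {S : ℝ}
    (hpos : Summable fun k : ℕ => f ((k:ℤ)+1)) (hneg : Summable fun k : ℕ => f (-((k:ℤ)+1)))
    (hpair : HasSum (fun k : ℕ => f ((k:ℤ)+1) + f (-((k:ℤ)+1))) S) : HasSum f (f 0 + S) := by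
  have hApos := hpos.hasSum
  have hAneg := hneg.hasSum
  have hS : S = (∑' k : ℕ, f ((k:ℤ)+1)) + ∑' k : ℕ, f (-((k:ℤ)+1)) :=
    hpair.unique (hApos.add hAneg)
  have h2 : HasSum (fun n : ℕ => f (n:ℤ))
      ((∑' k : ℕ, f ((k:ℤ)+1)) + ∑ i ∈ range 1, f (i:ℤ)) := by
    apply (hasSum_nat_add_iff (f := fun n : ℕ => f (n:ℤ)) 1).mp
    exact hApos.congr_fun fun n => by push_cast; ring_nf
  rw [Finset.sum_range_one] at h2
  have h3 := HasSum.of_nat_of_neg_add_one h2 (hAneg.congr_fun fun n => by push_cast; ring_nf)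
  simp only [Nat.cast_zero] at h3
  have heq : (∑' k : ℕ, f ((k:ℤ)+1)) + f 0 + ∑' k : ℕ, f (-((k:ℤ)+1)) = f 0 + S := by
    rw [hS]; ring
  rw [heq] at h3
  exact h3

lemma aux8 (a b : ℤ) (ha : 1 ≤ a) (hb : 1 ≤ b) : (2*a+b)^2 ≤ 8*a*b*(a+b) := by
  nlinarith [mul_nonneg (mul_nonneg (sub_nonneg.mpr ha) (sub_nonneg.mpr hb)) (by omega : (0:ℤ) ≤ a),
    mul_nonneg (mul_nonneg (sub_nonneg.mpr ha) (sub_nonneg.mpr hb)) (by omega : (0:ℤ) ≤ b),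
    mul_nonneg (sub_nonneg.mpr ha) (sub_nonneg.mpr hb),
    mul_nonneg (mul_nonneg (by omega : (0:ℤ) ≤ a) (by omega : (0:ℤ) ≤ a)) (sub_nonneg.mpr hb),
    mul_nonneg (mul_nonneg (by omega : (0:ℤ) ≤ a) (by omega : (0:ℤ) ≤ b)) (sub_nonneg.mpr hb),
    mul_nonneg (mul_nonneg (by omega : (0:ℤ) ≤ a) (by omega : (0:ℤ) ≤ b)) (sub_nonneg.mpr ha)]

lemma key_ineq (m n : ℤ) (hm : 1 ≤ m) (hn : n ≠ 0) (h1 : m + n ≠ 0) (h2 : m + 2*n ≠ 0) :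
    m^2 * n^2 ≤ 8 * |n^3 * (m+n) * (m+2*n)| := by
  rcases lt_or_gt_of_ne hn with hneg | hpos
  · set j : ℤ := -n with hj
    have hj1 : 1 ≤ j := by omega
    have habs : |n^3 * (m+n) * (m+2*n)| = j^3 * |m - j| * |m - 2*j| := by
      have hrw : n^3 * (m+n) * (m+2*n) = (-(j^3)) * (m - j) * (m - 2*j) := by rw [hj]; ring
      rw [hrw, abs_mul, abs_mul, abs_neg, abs_pow, abs_of_pos (by omega : (0:ℤ) < j)]
    rw [habs, show n^2 = j^2 by rw [hj]; ring]
    rcases lt_trichotomy (2*j) m with hlt | heq | hgt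
    · rw [abs_of_pos (by omega), abs_of_pos (by omega)]
      have key := aux8 j (m - 2*j) hj1 (by omega)
      calc m^2 * j^2 = j^2 * (2*j + (m - 2*j))^2 := by ring
        _ ≤ j^2 * (8*j*(m-2*j)*(j + (m - 2*j))) :=
            mul_le_mul_of_nonneg_left key (by positivity)
        _ = 8 * (j^3 * (m-j) * (m-2*j)) := by ring
    · exact absurd (by omega : m + 2*n = 0) h2
    · rcases lt_trichotomy j m with hjm | hje | hjm
      · rw [abs_of_pos (by omega), abs_of_neg (by omega)]
        have key := aux8 (m - j) (2*j - m) (by omega) (by omega)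
        calc m^2 * j^2 = j^2 * (2*(m-j) + (2*j-m))^2 := by ring
          _ ≤ j^2 * (8*(m-j)*(2*j-m)*((m-j) + (2*j-m))) :=
              mul_le_mul_of_nonneg_left key (by positivity)
          _ = 8 * (j^3 * (m-j) * -(m-2*j)) := by ring
      · exact absurd (by omega : m + n = 0) h1
      · rw [abs_of_neg (by omega), abs_of_neg (by omega)]
        have hmj : m^2 ≤ j^2 := by nlinarith
        have s1 : m^2 * j^2 ≤ j^2 * j^2 := by nlinarith
        have s2 : j^2 * j^2 ≤ 8 * (j^3 * (j - m) * (2*j - m)) := by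
          have e1 : j ≤ 2*j - m := by omega
          have e2 : 1 ≤ j - m := by omega
          have t1 : j^3 * j ≤ j^3 * (2*j-m) := mul_le_mul_of_nonneg_left e1 (by positivity)
          have t2 : j^3 * (2*j-m) ≤ (j^3 * (j-m)) * (2*j-m) := by
            have : j^3 * 1 ≤ j^3 * (j - m) := mul_le_mul_of_nonneg_left e2 (by positivity)
            nlinarith [this, (by omega : (0:ℤ) ≤ 2*j-m)]
          nlinarith [t1, t2]
        calc m^2 * j^2 ≤ j^2*j^2 := s1
          _ ≤ 8 * (j^3 * (j-m) * (2*j-m)) := s2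
          _ = 8 * (j^3 * -(m-j) * -(m-2*j)) := by ring
  · have h3 : (0:ℤ) < n^3 * (m+n) * (m+2*n) := by positivity
    rw [abs_of_pos h3]
    have e3 : n^2 ≤ n^3 := by nlinarith
    have s1 : m*m ≤ (m+n)*(m+2*n) := by nlinarith
    have s2 : n^2 * (m*m) ≤ n^2 * ((m+n)*(m+2*n)) := mul_le_mul_of_nonneg_left s1 (by positivity)
    have s3 : n^2 * ((m+n)*(m+2*n)) ≤ n^3 * ((m+n)*(m+2*n)) := by
      apply mul_le_mul_of_nonneg_right e3
      nlinarith
    nlinarith [s2, s3]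

lemma abs_div_le (C D : ℝ) (k : ℕ) (hC : 0 ≤ C) (hD : ((k:ℝ)+1)^2 ≤ |D|) :
    |C / D| ≤ C / ((k:ℝ)+1)^2 := by
  rw [abs_div, abs_of_nonneg hC]
  gcongr

lemma hasSumP1 (m : ℤ) (hm : 1 ≤ m) :
    HasSum (fun n : ℤ => -3 / ((m:ℝ)^3 * (n:ℝ)^2)) (-Real.pi^2 / (m:ℝ)^3) := by
  have hA : (1:ℝ) ≤ (m:ℝ) := by exact_mod_cast hm
  have hA0 : (0:ℝ) < (m:ℝ) := by linarith
  set f : ℤ → ℝ := fun n => -3 / ((m:ℝ)^3 * (n:ℝ)^2) with hf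
  have hbnd : ∀ (k : ℕ) (x : ℝ), x = (k:ℝ)+1 ∨ x = -((k:ℝ)+1) → |(-3 : ℝ) / ((m:ℝ)^3 * x^2)| ≤ 3 / ((k:ℝ)+1)^2 := by
    intro k x hx
    have hx2 : x^2 = ((k:ℝ)+1)^2 := by rcases hx with h | h <;> rw [h] <;> ring
    rw [show (-3 : ℝ) / ((m:ℝ)^3 * x^2) = -(3 / ((m:ℝ)^3 * x^2)) by ring, abs_neg]
    apply abs_div_le _ _ _ (by norm_num)
    rw [abs_of_nonneg (by positivity), hx2]
    nlinarith [sq_nonneg ((k:ℝ)+1), pow_le_pow_left₀ (by norm_num : (0:ℝ) ≤ 1) hA 3]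
  have hpos : Summable fun k : ℕ => f ((k:ℤ)+1) := by
    apply summable_sq_aux 3
    intro k
    have : ((((k:ℤ)+1 : ℤ)):ℝ) = (k:ℝ)+1 := by push_cast; ring
    rw [hf]; simp only [this]
    exact hbnd k _ (Or.inl rfl)
  have hneg : Summable fun k : ℕ => f (-((k:ℤ)+1)) := by
    apply summable_sq_aux 3
    intro k
    have : (((-((k:ℤ)+1) : ℤ)):ℝ) = -((k:ℝ)+1) := by push_cast; ring
    rw [hf]; simp only [this]
    exact hbnd k _ (Or.inr rfl)
  have hpair : HasSum (fun k : ℕ => f ((k:ℤ)+1) + f (-((k:ℤ)+1)))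
      ((-6/(m:ℝ)^3) * (Real.pi^2/6)) := by
    have := basel.mul_left (-6/(m:ℝ)^3)
    apply this.congr_fun
    intro k
    have h1 : ((((k:ℤ)+1 : ℤ)):ℝ) = (k:ℝ)+1 := by push_cast; ring
    have h2 : (((-((k:ℤ)+1) : ℤ)):ℝ) = -((k:ℝ)+1) := by push_cast; ring
    rw [hf]; simp only [h1, h2]
    rw [show (-((k:ℝ)+1))^2 = ((k:ℝ)+1)^2 by ring, ← add_div, mul_one_div, div_div]
    norm_num
  have := int_hasSum hpos hneg hpair
  have hf0 : f 0 = 0 := by rw [hf]; simp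
  rw [hf0, zero_add] at this
  have hval : (-6/(m:ℝ)^3) * (Real.pi^2/6) = -Real.pi^2 / (m:ℝ)^3 := by
    field_simp
  rw [hval] at this
  exact this

lemma hasSumP2 (m : ℤ) (hm : 1 ≤ m) :
    HasSum (fun n : ℤ => 1 / ((m:ℝ)^2 * (n:ℝ)^3)) 0 := by
  have hA : (1:ℝ) ≤ (m:ℝ) := by exact_mod_cast hm
  set f : ℤ → ℝ := fun n => 1 / ((m:ℝ)^2 * (n:ℝ)^3) with hf
  have hpos : Summable fun k : ℕ => f ((k:ℤ)+1) := by
    apply summable_sq_aux 1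
    intro k
    have h1 : ((((k:ℤ)+1 : ℤ)):ℝ) = (k:ℝ)+1 := by push_cast; ring
    rw [hf]; simp only [h1]
    apply abs_div_le _ _ _ (by norm_num)
    rw [abs_of_nonneg (by positivity)]
    have e1 : (1:ℝ) ≤ (m:ℝ)^2 := by nlinarith
    have e2 : ((k:ℝ)+1)^2 ≤ ((k:ℝ)+1)^3 := by nlinarith [Nat.cast_nonneg (α := ℝ) k]
    nlinarith [mul_le_mul_of_nonneg_right e1 (by positivity : (0:ℝ) ≤ ((k:ℝ)+1)^3)]
  have hneg : Summable fun k : ℕ => f (-((k:ℤ)+1)) := by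
    apply summable_sq_aux 1
    intro k
    have h2 : (((-((k:ℤ)+1) : ℤ)):ℝ) = -((k:ℝ)+1) := by push_cast; ring
    rw [hf]; simp only [h2]
    rw [show ((m:ℝ)^2 * (-((k:ℝ)+1))^3) = -((m:ℝ)^2 * ((k:ℝ)+1)^3) by ring, div_neg, abs_neg]
    apply abs_div_le _ _ _ (by norm_num)
    rw [abs_of_nonneg (by positivity)]
    have e1 : (1:ℝ) ≤ (m:ℝ)^2 := by nlinarith
    have e2 : ((k:ℝ)+1)^2 ≤ ((k:ℝ)+1)^3 := by nlinarith [Nat.cast_nonneg (α := ℝ) k]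
    nlinarith [mul_le_mul_of_nonneg_right e1 (by positivity : (0:ℝ) ≤ ((k:ℝ)+1)^3)]
  have hpair : HasSum (fun k : ℕ => f ((k:ℤ)+1) + f (-((k:ℤ)+1))) 0 := by
    apply hasSum_zero.congr_fun
    intro k
    have h1 : ((((k:ℤ)+1 : ℤ)):ℝ) = (k:ℝ)+1 := by push_cast; ring
    have h2 : (((-((k:ℤ)+1) : ℤ)):ℝ) = -((k:ℝ)+1) := by push_cast; ring
    rw [hf]; simp only [h1, h2]
    rw [show ((m:ℝ)^2 * (-((k:ℝ)+1))^3) = -((m:ℝ)^2 * ((k:ℝ)+1)^3) by ring, div_neg]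
    ring
  have := int_hasSum hpos hneg hpair
  have hf0 : f 0 = 0 := by rw [hf]; simp
  rw [hf0, zero_add] at this
  exact this

lemma sumP3pos (m : ℤ) (hm : 1 ≤ m) : Summable fun k : ℕ =>
    7 / ((m:ℝ)^3 * (((k:ℤ)+1 : ℤ):ℝ) * ((m:ℝ) + 2*(((k:ℤ)+1 : ℤ):ℝ))) := by
  have hA : (1:ℝ) ≤ (m:ℝ) := by exact_mod_cast hm
  apply summable_sq_aux 7
  intro k
  have h1 : ((((k:ℤ)+1 : ℤ)):ℝ) = (k:ℝ)+1 := by push_cast; ring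
  rw [h1]
  apply abs_div_le _ _ _ (by norm_num)
  rw [abs_of_nonneg (by positivity)]
  have e1 : (1:ℝ) ≤ (m:ℝ)^3 := one_le_pow₀ hA
  nlinarith [Nat.cast_nonneg (α := ℝ) k, mul_le_mul_of_nonneg_right e1
    (by positivity : (0:ℝ) ≤ ((k:ℝ)+1) * ((m:ℝ) + 2*((k:ℝ)+1)))]

lemma sumP3neg (m : ℤ) (hm : 1 ≤ m) : Summable fun k : ℕ =>
    7 / ((m:ℝ)^3 * ((-((k:ℤ)+1) : ℤ):ℝ) * ((m:ℝ) + 2*((-((k:ℤ)+1) : ℤ):ℝ))) := by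
  have hA : (1:ℝ) ≤ (m:ℝ) := by exact_mod_cast hm
  set N : ℕ := m.toNat with hN
  have hNc : ((N:ℕ):ℝ) = (m:ℝ) := by
    rw [hN]; exact_mod_cast congrArg (Int.cast : ℤ → ℝ) (Int.toNat_of_nonneg (by omega))
  apply (summable_nat_add_iff N).mp
  apply summable_sq_aux 7
  intro k
  have h1 : ((-(((k+N:ℕ):ℤ)+1) : ℤ):ℝ) = -((k:ℝ)+N+1) := by push_cast; ring
  rw [h1]
  have hrw : (m:ℝ)^3 * -((k:ℝ)+N+1) * ((m:ℝ) + 2*(-((k:ℝ)+N+1)))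
      = (m:ℝ)^3 * (((k:ℝ)+N+1) * (2*((k:ℝ)+N+1) - (m:ℝ))) := by ring
  rw [hrw]
  apply abs_div_le _ _ _ (by norm_num)
  have hN1 : (1:ℝ) ≤ (N:ℝ) := by rw [hNc]; exact hA
  have hkn : (0:ℝ) ≤ (k:ℝ) := Nat.cast_nonneg k
  have hfac : (0:ℝ) ≤ ((k:ℝ)+N+1) * (2*((k:ℝ)+N+1) - (m:ℝ)) := by
    apply mul_nonneg (by linarith)
    rw [← hNc]; linarith
  rw [abs_of_nonneg (mul_nonneg (by positivity) hfac)]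
  have e1 : (1:ℝ) ≤ (m:ℝ)^3 := one_le_pow₀ (by linarith)
  have e2 : (k:ℝ)+1 ≤ (k:ℝ)+(N:ℝ)+1 := by
    have : (1:ℝ) ≤ (N:ℝ) := by rw [hNc]; exact hA
    linarith
  have e3 : (k:ℝ)+1 ≤ 2*((k:ℝ)+(N:ℝ)+1) - (m:ℝ) := by
    rw [← hNc]; nlinarith [Nat.cast_nonneg (α := ℝ) k, Nat.cast_nonneg (α := ℝ) N]
  have e4 : ((k:ℝ)+1)^2 ≤ ((k:ℝ)+N+1) * (2*((k:ℝ)+N+1) - (m:ℝ)) := by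
    have := mul_le_mul e2 e3 (by positivity) (by positivity)
    nlinarith [this]
  nlinarith [mul_le_mul_of_nonneg_right e1
    (by nlinarith [e4, sq_nonneg ((k:ℝ)+1)] : (0:ℝ) ≤ ((k:ℝ)+N+1) * (2*((k:ℝ)+N+1) - (m:ℝ)))]

lemma hasSumP3_odd (m : ℤ) (hm : 1 ≤ m) (hodd : m % 2 = 1) :
    HasSum (fun n : ℤ => 7 / ((m:ℝ)^3 * (n:ℝ) * ((m:ℝ) + 2*(n:ℝ)))) (14 / (m:ℝ)^5) := by
  have hA : (1:ℝ) ≤ (m:ℝ) := by exact_mod_cast hm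
  have hA0 : (0:ℝ) < (m:ℝ) := by linarith
  set r : ℕ := ((m-1)/2).toNat with hr
  have hrm : m = 2*(r:ℤ)+1 := by rw [hr]; omega
  have hrc : (m:ℝ) = 2*(r:ℝ)+1 := by exact_mod_cast congrArg (Int.cast : ℤ → ℝ) hrm
  set f : ℤ → ℝ := fun n => 7 / ((m:ℝ)^3 * (n:ℝ) * ((m:ℝ) + 2*(n:ℝ))) with hf
  have hpair : HasSum (fun k : ℕ => f ((k:ℤ)+1) + f (-((k:ℤ)+1))) ((-14/(m:ℝ)^4) * (-1/(m:ℝ))) := by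
    have base := (L3 r).mul_left (-14/(m:ℝ)^4)
    rw [← hrc] at base
    apply base.congr_fun
    intro k
    have h1 : ((((k:ℤ)+1 : ℤ)):ℝ) = (k:ℝ)+1 := by push_cast; ring
    have h2 : (((-((k:ℤ)+1) : ℤ)):ℝ) = -((k:ℝ)+1) := by push_cast; ring
    rw [hf]; simp only [h1, h2]
    set x : ℝ := (k:ℝ)+1 with hx
    have hx0 : (0:ℝ) < x := by rw [hx]; positivity
    have hp : (m:ℝ) + 2*x ≠ 0 := by positivity
    have hm2x : (m:ℝ) - 2*x ≠ 0 := by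
      have hne : m ≠ 2*((k:ℤ)+1) := by omega
      intro hcon
      apply hne
      have : (m:ℝ) = 2*(((k:ℤ)+1 : ℤ):ℝ) := by rw [h1]; rw [hx] at hcon; linarith
      exact_mod_cast this
    have hd : (m:ℝ)^2 - 4*x^2 ≠ 0 := by
      intro hcon; apply hm2x; nlinarith [sq_nonneg ((m:ℝ) - 2*x), sq_nonneg ((m:ℝ)+2*x)]
    have hm0 : (m:ℝ) ≠ 0 := by linarith
    have hx' : x ≠ 0 := ne_of_gt hx0
    rw [show (m:ℝ) + 2*(-x) = (m:ℝ) - 2*x by ring]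
    have : (m:ℝ) + x*2 ≠ 0 := by contrapose! hp; linarith
    have : (m:ℝ) - x*2 ≠ 0 := by contrapose! hm2x; linarith
    have : (m:ℝ)^2 - x^2*4 ≠ 0 := by contrapose! hd; linarith
    field_simp
    ring
  have := int_hasSum (f := f) (sumP3pos m hm) (sumP3neg m hm) hpair
  have hf0 : f 0 = 0 := by rw [hf]; simp
  rw [hf0, zero_add] at this
  have hval : (-14/(m:ℝ)^4) * (-1/(m:ℝ)) = 14 / (m:ℝ)^5 := by
    field_simp
  rw [hval] at this
  exact this

lemma sumP4pos (m : ℤ) (hm : 1 ≤ m) : Summable fun k : ℕ =>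
    -1 / ((m:ℝ)^3 * ((m:ℝ) + (((k:ℤ)+1 : ℤ):ℝ)) * ((m:ℝ) + 2*(((k:ℤ)+1 : ℤ):ℝ))) := by
  have hA : (1:ℝ) ≤ (m:ℝ) := by exact_mod_cast hm
  apply summable_sq_aux 1
  intro k
  have h1 : ((((k:ℤ)+1 : ℤ)):ℝ) = (k:ℝ)+1 := by push_cast; ring
  rw [h1, show (-1:ℝ) / ((m:ℝ)^3 * ((m:ℝ) + ((k:ℝ)+1)) * ((m:ℝ) + 2*((k:ℝ)+1)))
      = -(1 / ((m:ℝ)^3 * ((m:ℝ) + ((k:ℝ)+1)) * ((m:ℝ) + 2*((k:ℝ)+1)))) by ring, abs_neg]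
  apply abs_div_le _ _ _ (by norm_num)
  rw [abs_of_nonneg (by positivity)]
  have e1 : (1:ℝ) ≤ (m:ℝ)^3 := one_le_pow₀ hA
  have hkn : (0:ℝ) ≤ (k:ℝ) := Nat.cast_nonneg k
  nlinarith [mul_le_mul_of_nonneg_right e1
    (by nlinarith : (0:ℝ) ≤ ((m:ℝ) + ((k:ℝ)+1)) * ((m:ℝ) + 2*((k:ℝ)+1)))]

lemma sumP4neg (m : ℤ) (hm : 1 ≤ m) : Summable fun k : ℕ =>
    -1 / ((m:ℝ)^3 * ((m:ℝ) + ((-((k:ℤ)+1) : ℤ):ℝ)) * ((m:ℝ) + 2*((-((k:ℤ)+1) : ℤ):ℝ))) := by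
  have hA : (1:ℝ) ≤ (m:ℝ) := by exact_mod_cast hm
  set N : ℕ := m.toNat with hN
  have hNc : ((N:ℕ):ℝ) = (m:ℝ) := by
    rw [hN]; exact_mod_cast congrArg (Int.cast : ℤ → ℝ) (Int.toNat_of_nonneg (by omega))
  apply (summable_nat_add_iff N).mp
  apply summable_sq_aux 1
  intro k
  have h1 : ((-(((k+N:ℕ):ℤ)+1) : ℤ):ℝ) = -((k:ℝ)+N+1) := by push_cast; ring
  rw [h1]
  have hN1 : (1:ℝ) ≤ (N:ℝ) := by rw [hNc]; exact hA
  have hkn : (0:ℝ) ≤ (k:ℝ) := Nat.cast_nonneg k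
  have hrw : (-1:ℝ) / ((m:ℝ)^3 * ((m:ℝ) + -((k:ℝ)+N+1)) * ((m:ℝ) + 2*(-((k:ℝ)+N+1))))
      = -(1 / ((m:ℝ)^3 * ((((k:ℝ)+N+1) - (m:ℝ)) * (2*((k:ℝ)+N+1) - (m:ℝ))))) := by
    rw [show (m:ℝ)^3 * ((m:ℝ) + -((k:ℝ)+N+1)) * ((m:ℝ) + 2*(-((k:ℝ)+N+1)))
        = (m:ℝ)^3 * ((((k:ℝ)+N+1) - (m:ℝ)) * (2*((k:ℝ)+N+1) - (m:ℝ))) by ring]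
    ring
  rw [hrw, abs_neg]
  apply abs_div_le _ _ _ (by norm_num)
  have hfac1 : (k:ℝ)+1 ≤ ((k:ℝ)+N+1) - (m:ℝ) + (1:ℝ) * (N:ℝ) := by rw [← hNc]; linarith
  have hfac : (0:ℝ) ≤ (((k:ℝ)+N+1) - (m:ℝ)) * (2*((k:ℝ)+N+1) - (m:ℝ)) := by
    apply mul_nonneg <;> rw [← hNc] <;> linarith
  rw [abs_of_nonneg (mul_nonneg (by positivity) hfac)]
  have e1 : (1:ℝ) ≤ (m:ℝ)^3 := one_le_pow₀ hA
  have e2 : (k:ℝ)+1 ≤ ((k:ℝ)+N+1) - (m:ℝ) + (N:ℝ) := by rw [← hNc]; linarith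
  have e3 : ((k:ℝ)+1)^2 ≤ (((k:ℝ)+N+1) - (m:ℝ)) * (2*((k:ℝ)+N+1) - (m:ℝ)) := by
    have g1 : (k:ℝ)+1 ≤ ((k:ℝ)+N+1) - (m:ℝ) := by rw [← hNc]; linarith
    have g2 : (k:ℝ)+1 ≤ 2*((k:ℝ)+N+1) - (m:ℝ) := by rw [← hNc]; linarith
    nlinarith [mul_le_mul g1 g2 (by positivity) (by rw [← hNc]; linarith)]
  nlinarith [mul_le_mul_of_nonneg_right e1 hfac]

lemma hasSumP4_odd (m : ℤ) (hm : 1 ≤ m) (hodd : m % 2 = 1) :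
    HasSum (fun n : ℤ => -1 / ((m:ℝ)^3 * ((m:ℝ) + (n:ℝ)) * ((m:ℝ) + 2*(n:ℝ))))
      (-2 / (m:ℝ)^5) := by
  have hA : (1:ℝ) ≤ (m:ℝ) := by exact_mod_cast hm
  have hA0 : (0:ℝ) < (m:ℝ) := by linarith
  have hm0 : (m:ℝ) ≠ 0 := ne_of_gt hA0
  set r : ℕ := ((m-1)/2).toNat with hr
  have hrm : m = 2*(r:ℤ)+1 := by rw [hr]; omega
  have hrc : (m:ℝ) = 2*(r:ℝ)+1 := by exact_mod_cast congrArg (Int.cast : ℤ → ℝ) hrm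
  set N : ℕ := m.toNat with hN
  have hN1 : 1 ≤ N := by omega
  have hNc : ((N:ℕ):ℝ) = (m:ℝ) := by
    rw [hN]; exact_mod_cast congrArg (Int.cast : ℤ → ℝ) (Int.toNat_of_nonneg (by omega))
  set f : ℤ → ℝ := fun n => -1 / ((m:ℝ)^3 * ((m:ℝ) + (n:ℝ)) * ((m:ℝ) + 2*(n:ℝ))) with hf
  -- q4 + e4
  have part1 := (L2 N hN1).mul_left (2/(m:ℝ)^3)
  rw [hNc] at part1
  have part2 := (L3 r).mul_left (2/(m:ℝ)^4)
  rw [← hrc] at part2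
  have q4hs := part1.sub part2
  have e4hs := hasSum_ite_eq (N-1) (-3/(2*(m:ℝ)^5))
  have pairhs := q4hs.add e4hs
  have hpair : HasSum (fun k : ℕ => f ((k:ℤ)+1) + f (-((k:ℤ)+1)))
      (2/(m:ℝ)^3 * (-3 / (4 * (m:ℝ)^2)) - 2/(m:ℝ)^4 * (-1/(m:ℝ)) + -3/(2*(m:ℝ)^5)) := by
    apply pairhs.congr_fun
    intro k
    have h1 : ((((k:ℤ)+1 : ℤ)):ℝ) = (k:ℝ)+1 := by push_cast; ring
    have h2 : (((-((k:ℤ)+1) : ℤ)):ℝ) = -((k:ℝ)+1) := by push_cast; ring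
    rw [hf]; simp only [h1, h2]
    set x : ℝ := (k:ℝ)+1 with hx
    have hx0 : (0:ℝ) < x := by rw [hx]; positivity
    by_cases hk : k = N - 1
    · subst hk
      have hxm : x = (m:ℝ) := by
        rw [hx, ← hNc]
        have : (N - 1 : ℕ) + 1 = N := by omega
        exact_mod_cast congrArg (Nat.cast : ℕ → ℝ) this
      rw [if_pos rfl, hxm]
      rw [show (m:ℝ)^2 - (m:ℝ)^2 = 0 by ring, div_zero,
          show (m:ℝ)^3 * ((m:ℝ) + -(m:ℝ)) * ((m:ℝ) + 2*(-(m:ℝ))) = 0 by ring, div_zero,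
          show (m:ℝ)^2 - 4*(m:ℝ)^2 = -(3*(m:ℝ)^2) by ring]
      rw [show (m:ℝ)^3 * ((m:ℝ) + (m:ℝ)) * ((m:ℝ) + 2*(m:ℝ)) = 6*(m:ℝ)^5 by ring]
      field_simp
      ring
    · rw [if_neg hk]
      have hxm : x ≠ (m:ℝ) := by
        intro hcon
        apply hk
        have : ((k+1 : ℕ):ℝ) = ((N:ℕ):ℝ) := by push_cast; rw [hNc]; rw [hx] at hcon; linarith
        have h5 : (k+1 : ℕ) = N := Nat.cast_injective this
        omega
      have hd1 : (m:ℝ) + x ≠ 0 := by positivity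
      have hd2 : (m:ℝ) + 2*x ≠ 0 := by positivity
      have hd3 : (m:ℝ) - x ≠ 0 := fun hcon => hxm (by linarith)
      have hd4 : (m:ℝ) - 2*x ≠ 0 := by
        have hne : m ≠ 2*((k:ℤ)+1) := by omega
        intro hcon
        apply hne
        have : (m:ℝ) = 2*(((k:ℤ)+1 : ℤ):ℝ) := by rw [h1]; rw [hx] at hcon; linarith
        exact_mod_cast this
      have hD1 : (m:ℝ)^2 - x^2 ≠ 0 := by
        intro hcon; apply hd3; nlinarith [sq_nonneg ((m:ℝ)-x), sq_nonneg ((m:ℝ)+x)]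
      have hD2 : (m:ℝ)^2 - 4*x^2 ≠ 0 := by
        intro hcon; apply hd4; nlinarith [sq_nonneg ((m:ℝ)-2*x), sq_nonneg ((m:ℝ)+2*x)]
      rw [show (m:ℝ) + -x = (m:ℝ) - x by ring, show (m:ℝ) + 2*(-x) = (m:ℝ) - 2*x by ring]
      have : (m:ℝ) + x*2 ≠ 0 := by contrapose! hd2; linarith
      have : (m:ℝ) - x*2 ≠ 0 := by contrapose! hd4; linarith
      have : (m:ℝ)^2 - x^2*4 ≠ 0 := by contrapose! hD2; linarith
      field_simp
      ring
  have := int_hasSum (f := f) (sumP4pos m hm) (sumP4neg m hm) hpair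
  have hf0 : f 0 = -1/(m:ℝ)^5 := by
    rw [hf]; simp only [Int.cast_zero, add_zero, mul_zero]
    rw [show (m:ℝ)^3 * (m:ℝ) * (m:ℝ) = (m:ℝ)^5 by ring]
  rw [hf0] at this
  have hval : -1/(m:ℝ)^5 + (2/(m:ℝ)^3 * (-3 / (4 * (m:ℝ)^2)) - 2/(m:ℝ)^4 * (-1/(m:ℝ))
      + -3/(2*(m:ℝ)^5)) = -2/(m:ℝ)^5 := by
    field_simp
    ring
  rw [hval] at this
  exact this

lemma inner_odd (m : ℤ) (hm : 1 ≤ m) (hodd : m % 2 = 1) :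
    HasSum (fun n : ℤ => 1 / ((n:ℝ)^3 * ((m:ℝ) + (n:ℝ)) * ((m:ℝ) + 2*(n:ℝ))))
      (-Real.pi^2 / (m:ℝ)^3 + 10 / (m:ℝ)^5) := by
  have hA : (1:ℝ) ≤ (m:ℝ) := by exact_mod_cast hm
  have hA0 : (0:ℝ) < (m:ℝ) := by linarith
  have hm0 : (m:ℝ) ≠ 0 := ne_of_gt hA0
  set h : ℤ → ℝ := fun n => 1 / ((n:ℝ)^3 * ((m:ℝ) + (n:ℝ)) * ((m:ℝ) + 2*(n:ℝ))) with hh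
  set T : ℤ → ℝ := fun n => ((-3 / ((m:ℝ)^3 * (n:ℝ)^2) + 1 / ((m:ℝ)^2 * (n:ℝ)^3))
      + 7 / ((m:ℝ)^3 * (n:ℝ) * ((m:ℝ) + 2*(n:ℝ))))
      + -1 / ((m:ℝ)^3 * ((m:ℝ) + (n:ℝ)) * ((m:ℝ) + 2*(n:ℝ))) with hT
  have hThs : HasSum T (((-Real.pi^2 / (m:ℝ)^3 + 0) + 14 / (m:ℝ)^5) + -2/(m:ℝ)^5) :=
    (((hasSumP1 m hm).add (hasSumP2 m hm)).add (hasSumP3_odd m hm hodd)).add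
      (hasSumP4_odd m hm hodd)
  set c : ℤ → ℝ := fun n => h n - T n with hc
  have hcvanish : ∀ n : ℤ, n ∉ ({0, -m} : Finset ℤ) → c n = 0 := by
    intro n hn
    simp only [Finset.mem_insert, Finset.mem_singleton] at hn
    push_neg at hn
    obtain ⟨hn0, hnm⟩ := hn
    have hx0 : (n:ℝ) ≠ 0 := by exact_mod_cast hn0
    have hd1 : (m:ℝ) + (n:ℝ) ≠ 0 := by
      intro hcon
      apply hnm
      have : (n:ℝ) = ((-m : ℤ):ℝ) := by push_cast; linarith
      exact_mod_cast this
    have hd2 : (m:ℝ) + 2*(n:ℝ) ≠ 0 := by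
      have hne : m + 2*n ≠ 0 := by omega
      intro hcon
      apply hne
      have : ((m + 2*n : ℤ):ℝ) = 0 := by push_cast; linarith
      exact_mod_cast this
    rw [hc, hh, hT]
    simp only []
    have : (m:ℝ) + (n:ℝ)*2 ≠ 0 := by contrapose! hd2; linarith
    field_simp
    ring
  have hsum := hasSum_sum_of_ne_finset_zero (L := SummationFilter.unconditional ℤ) (s := ({0, -m} : Finset ℤ)) (f := c) hcvanish
  have hzm : (0:ℤ) ≠ -m := by omega
  rw [Finset.sum_pair hzm] at hsum
  have hc0 : c 0 = 1 / (m:ℝ)^5 := by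
    rw [hc, hh, hT]
    simp only [Int.cast_zero]
    rw [show ((0:ℝ))^3 * ((m:ℝ) + 0) * ((m:ℝ) + 2*0) = 0 by ring, div_zero,
        show ((m:ℝ)^3 * (0:ℝ)^2) = 0 by ring, div_zero,
        show ((m:ℝ)^2 * (0:ℝ)^3) = 0 by ring, div_zero,
        show ((m:ℝ)^3 * (0:ℝ) * ((m:ℝ) + 2*0)) = 0 by ring, div_zero,
        show ((m:ℝ)^3 * ((m:ℝ) + 0) * ((m:ℝ) + 2*0)) = (m:ℝ)^5 by ring]
    ring
  have hcm : c (-m) = -3 / (m:ℝ)^5 := by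
    rw [hc, hh, hT]
    simp only [Int.cast_neg]
    rw [show (-(m:ℝ))^3 * ((m:ℝ) + -(m:ℝ)) * ((m:ℝ) + 2*(-(m:ℝ))) = 0 by ring, div_zero,
        show ((m:ℝ)^3 * ((m:ℝ) + -(m:ℝ)) * ((m:ℝ) + 2*(-(m:ℝ)))) = 0 by ring, div_zero,
        show ((m:ℝ)^3 * (-(m:ℝ))^2) = (m:ℝ)^5 by ring,
        show ((m:ℝ)^2 * (-(m:ℝ))^3) = -((m:ℝ)^5) by ring,
        show ((m:ℝ)^3 * (-(m:ℝ)) * ((m:ℝ) + 2*(-(m:ℝ)))) = (m:ℝ)^5 by ring]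
    rw [div_neg]
    ring
  rw [hc0, hcm] at hsum
  have hfinal := hThs.add hsum
  have hfun : (fun n => T n + c n) = h := by
    funext n
    rw [hc]; ring
  rw [hfun] at hfinal
  have hval : (((-Real.pi^2 / (m:ℝ)^3 + 0) + 14 / (m:ℝ)^5) + -2/(m:ℝ)^5)
      + (1 / (m:ℝ)^5 + -3 / (m:ℝ)^5) = -Real.pi^2 / (m:ℝ)^3 + 10 / (m:ℝ)^5 := by
    field_simp
    ring
  rw [hval] at hfinal
  exact hfinal

lemma hasSumP3_even (m : ℤ) (hm : 1 ≤ m) (heven : m % 2 = 0) :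
    HasSum (fun n : ℤ => 7 / ((m:ℝ)^3 * (n:ℝ) * ((m:ℝ) + 2*(n:ℝ)))) (28 / (m:ℝ)^5) := by
  have hA : (1:ℝ) ≤ (m:ℝ) := by exact_mod_cast hm
  have hA0 : (0:ℝ) < (m:ℝ) := by linarith
  have hm0 : (m:ℝ) ≠ 0 := ne_of_gt hA0
  set K : ℤ := m / 2 with hK
  have hKm : m = 2 * K := by omega
  have hK1 : 1 ≤ K := by omega
  set K' : ℕ := K.toNat with hK'
  have hK'1 : 1 ≤ K' := by omega
  have hKc : ((K':ℕ):ℝ) = (K:ℝ) := by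
    exact_mod_cast congrArg (Int.cast : ℤ → ℝ) (Int.toNat_of_nonneg (by omega))
  have hmc : (m:ℝ) = 2*(K:ℝ) := by exact_mod_cast congrArg (Int.cast : ℤ → ℝ) hKm
  have hKc0 : (0:ℝ) < (K:ℝ) := by exact_mod_cast hK1
  set f : ℤ → ℝ := fun n => 7 / ((m:ℝ)^3 * (n:ℝ) * ((m:ℝ) + 2*(n:ℝ))) with hf
  have base := (L2 K' hK'1).mul_left (-7/(m:ℝ)^3)
  rw [hKc] at base
  have e3hs := hasSum_ite_eq (K'-1) (7/(4*(K:ℝ)^2*(m:ℝ)^3))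
  have pairhs := base.add e3hs
  have hpair : HasSum (fun k : ℕ => f ((k:ℤ)+1) + f (-((k:ℤ)+1)))
      ((-7/(m:ℝ)^3) * (-3/(4*(K:ℝ)^2)) + 7/(4*(K:ℝ)^2*(m:ℝ)^3)) := by
    apply pairhs.congr_fun
    intro k
    have h1 : ((((k:ℤ)+1 : ℤ)):ℝ) = (k:ℝ)+1 := by push_cast; ring
    have h2 : (((-((k:ℤ)+1) : ℤ)):ℝ) = -((k:ℝ)+1) := by push_cast; ring
    rw [hf]; simp only [h1, h2]
    set x : ℝ := (k:ℝ)+1 with hx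
    have hx0 : (0:ℝ) < x := by rw [hx]; positivity
    by_cases hk : k = K' - 1
    · subst hk
      have hxK : x = (K:ℝ) := by
        rw [hx, ← hKc]
        have : (K' - 1 : ℕ) + 1 = K' := by omega
        exact_mod_cast congrArg (Nat.cast : ℕ → ℝ) this
      rw [if_pos rfl, hxK, hmc]
      rw [show (2*(K:ℝ))^3 * -(K:ℝ) * (2*(K:ℝ) + 2*(-(K:ℝ))) = 0 by ring, div_zero, add_zero,
          show (2*(K:ℝ))^3 * (K:ℝ) * (2*(K:ℝ) + 2*(K:ℝ)) = 32*(K:ℝ)^5 by ring,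
          show (K:ℝ)^2 - (K:ℝ)^2 = 0 by ring, div_zero, mul_zero, zero_add,
          show 4*(K:ℝ)^2*(2*(K:ℝ))^3 = 32*(K:ℝ)^5 by ring]
    · rw [if_neg hk, add_zero]
      have hxK : x ≠ (K:ℝ) := by
        intro hcon
        apply hk
        have : ((k+1 : ℕ):ℝ) = ((K':ℕ):ℝ) := by push_cast; rw [hKc]; rw [hx] at hcon; linarith
        have h5 : (k+1 : ℕ) = K' := Nat.cast_injective this
        omega
      have hd2 : (m:ℝ) + 2*x ≠ 0 := by positivity
      have hd4 : (K:ℝ) - x ≠ 0 := fun hcon => hxK (by linarith)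
      have hD : (K:ℝ)^2 - x^2 ≠ 0 := by
        intro hcon; apply hd4; nlinarith [sq_nonneg ((K:ℝ)-x), sq_nonneg ((K:ℝ)+x)]
      have hx' : x ≠ 0 := ne_of_gt hx0
      rw [hmc]
      rw [show 2*(K:ℝ) + 2*(-x) = 2*((K:ℝ) - x) by ring,
          show 2*(K:ℝ) + 2*x = 2*((K:ℝ) + x) by ring]
      have hd1 : (K:ℝ) + x ≠ 0 := by positivity
      field_simp
      ring
  have := int_hasSum (f := f) (sumP3pos m hm) (sumP3neg m hm) hpair
  have hf0 : f 0 = 0 := by rw [hf]; simp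
  rw [hf0, zero_add] at this
  have hval : (-7/(m:ℝ)^3) * (-3/(4*(K:ℝ)^2)) + 7/(4*(K:ℝ)^2*(m:ℝ)^3) = 28 / (m:ℝ)^5 := by
    rw [hmc]
    have : (K:ℝ) ≠ 0 := ne_of_gt hKc0
    field_simp
    ring
  rw [hval] at this
  exact this

set_option maxHeartbeats 1600000 in
lemma hasSumP4_even (m : ℤ) (hm : 1 ≤ m) (heven : m % 2 = 0) :
    HasSum (fun n : ℤ => -1 / ((m:ℝ)^3 * ((m:ℝ) + (n:ℝ)) * ((m:ℝ) + 2*(n:ℝ))))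
      (-4 / (m:ℝ)^5) := by
  have hA : (1:ℝ) ≤ (m:ℝ) := by exact_mod_cast hm
  have hA0 : (0:ℝ) < (m:ℝ) := by linarith
  have hm0 : (m:ℝ) ≠ 0 := ne_of_gt hA0
  set K : ℤ := m / 2 with hK
  have hKm : m = 2 * K := by omega
  have hK1 : 1 ≤ K := by omega
  set K' : ℕ := K.toNat with hK'
  have hK'1 : 1 ≤ K' := by omega
  have hKc : ((K':ℕ):ℝ) = (K:ℝ) := by
    exact_mod_cast congrArg (Int.cast : ℤ → ℝ) (Int.toNat_of_nonneg (by omega))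
  have hmc : (m:ℝ) = 2*(K:ℝ) := by exact_mod_cast congrArg (Int.cast : ℤ → ℝ) hKm
  have hKc0 : (0:ℝ) < (K:ℝ) := by exact_mod_cast hK1
  have hKne : (K:ℝ) ≠ 0 := ne_of_gt hKc0
  set N : ℕ := m.toNat with hN
  have hN1 : 1 ≤ N := by omega
  have hNc : ((N:ℕ):ℝ) = (m:ℝ) := by
    exact_mod_cast congrArg (Int.cast : ℤ → ℝ) (Int.toNat_of_nonneg (by omega))
  have hNK : N = 2 * K' := by omega
  set f : ℤ → ℝ := fun n => -1 / ((m:ℝ)^3 * ((m:ℝ) + (n:ℝ)) * ((m:ℝ) + 2*(n:ℝ))) with hf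
  have part1 := (L2 N hN1).mul_left (2/(m:ℝ)^3)
  rw [hNc] at part1
  have part2 := (L2 K' hK'1).mul_left (1/(m:ℝ)^3)
  rw [hKc] at part2
  have q4hs := part1.sub part2
  have e4ahs := hasSum_ite_eq (N-1) (-3/(2*(m:ℝ)^5))
  have e4bhs := hasSum_ite_eq (K'-1) (-3/(4*(K:ℝ)^2*(m:ℝ)^3))
  have pairhs := (q4hs.add e4ahs).add e4bhs
  have hNKne : N - 1 ≠ K' - 1 := by omega
  have hpair : HasSum (fun k : ℕ => f ((k:ℤ)+1) + f (-((k:ℤ)+1)))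
      (2/(m:ℝ)^3 * (-3/(4*(m:ℝ)^2)) - 1/(m:ℝ)^3 * (-3/(4*(K:ℝ)^2)) + -3/(2*(m:ℝ)^5)
        + -3/(4*(K:ℝ)^2*(m:ℝ)^3)) := by
    apply pairhs.congr_fun
    intro k
    have h1 : ((((k:ℤ)+1 : ℤ)):ℝ) = (k:ℝ)+1 := by push_cast; ring
    have h2 : (((-((k:ℤ)+1) : ℤ)):ℝ) = -((k:ℝ)+1) := by push_cast; ring
    rw [hf]; simp only [h1, h2]
    set x : ℝ := (k:ℝ)+1 with hx
    have hx0 : (0:ℝ) < x := by rw [hx]; positivity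
    by_cases hk2 : k = K' - 1
    · subst hk2
      have hxK : x = (K:ℝ) := by
        rw [hx, ← hKc]
        have : (K' - 1 : ℕ) + 1 = K' := by omega
        exact_mod_cast congrArg (Nat.cast : ℕ → ℝ) this
      rw [if_pos rfl, if_neg hNKne.symm, hxK, hmc]
      rw [show 2*(K:ℝ) + -(K:ℝ) = (K:ℝ) by ring,
          show 2*(K:ℝ) + 2*(-(K:ℝ)) = 0 by ring, mul_zero, div_zero,
          show (K:ℝ)^2 - (K:ℝ)^2 = 0 by ring, div_zero, mul_zero, sub_zero, add_zero,
          show (2*(K:ℝ))^3 * (2*(K:ℝ) + (K:ℝ)) * (2*(K:ℝ) + 2*(K:ℝ)) = 96*(K:ℝ)^5 by ring,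
          show (2*(K:ℝ))^2 - (K:ℝ)^2 = 3*(K:ℝ)^2 by ring,
          show 4*(K:ℝ)^2*(2*(K:ℝ))^3 = 32*(K:ℝ)^5 by ring,
          show (2*(K:ℝ))^3 = 8*(K:ℝ)^3 by ring]
      field_simp
      ring
    · by_cases hk1 : k = N - 1
      · subst hk1
        have hxm : x = (m:ℝ) := by
          rw [hx, ← hNc]
          have : (N - 1 : ℕ) + 1 = N := by omega
          exact_mod_cast congrArg (Nat.cast : ℕ → ℝ) this
        rw [if_pos rfl, if_neg hk2, hxm, hmc]
        rw [show 2*(K:ℝ) + -(2*(K:ℝ)) = 0 by ring, mul_zero, zero_mul, div_zero,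
            show (2*(K:ℝ))^2 - (2*(K:ℝ))^2 = 0 by ring, div_zero, mul_zero, zero_sub, add_zero,
            show (2*(K:ℝ))^3 * (2*(K:ℝ) + 2*(K:ℝ)) * (2*(K:ℝ) + 2*(2*(K:ℝ))) = 192*(K:ℝ)^5 by ring,
            show (K:ℝ)^2 - (2*(K:ℝ))^2 = -(3*(K:ℝ)^2) by ring,
            show (2*(K:ℝ))^5 = 32*(K:ℝ)^5 by ring,
            show (2*(K:ℝ))^3 = 8*(K:ℝ)^3 by ring]
        rw [div_neg]
        field_simp
        ring
      · rw [if_neg hk2, if_neg hk1, add_zero, add_zero]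
        have hxK : x ≠ (K:ℝ) := by
          intro hcon
          apply hk2
          have : ((k+1 : ℕ):ℝ) = ((K':ℕ):ℝ) := by push_cast; rw [hKc]; rw [hx] at hcon; linarith
          have h5 : (k+1 : ℕ) = K' := Nat.cast_injective this
          omega
        have hxm : x ≠ (m:ℝ) := by
          intro hcon
          apply hk1
          have : ((k+1 : ℕ):ℝ) = ((N:ℕ):ℝ) := by push_cast; rw [hNc]; rw [hx] at hcon; linarith
          have h5 : (k+1 : ℕ) = N := Nat.cast_injective this
          omega
        have hd1 : (K:ℝ) - x ≠ 0 := fun hcon => hxK (by linarith)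
        have hd2 : (K:ℝ) + x ≠ 0 := by positivity
        have hd3 : 2*(K:ℝ) - x ≠ 0 := by
          rw [← hmc]; exact fun hcon => hxm (by linarith)
        have hd4 : 2*(K:ℝ) + x ≠ 0 := by positivity
        have hD1 : (2*(K:ℝ))^2 - x^2 ≠ 0 := by
          intro hcon; apply hd3; nlinarith [sq_nonneg (2*(K:ℝ)-x), sq_nonneg (2*(K:ℝ)+x)]
        have hD2 : (K:ℝ)^2 - x^2 ≠ 0 := by
          intro hcon; apply hd1; nlinarith [sq_nonneg ((K:ℝ)-x), sq_nonneg ((K:ℝ)+x)]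
        rw [hmc]
        rw [show 2*(K:ℝ) + -x = 2*(K:ℝ) - x by ring,
            show 2*(K:ℝ) + 2*(-x) = 2*((K:ℝ) - x) by ring,
            show 2*(K:ℝ) + 2*x = 2*((K:ℝ) + x) by ring]
        have : (2:ℝ)^2*(K:ℝ)^2 - x^2 ≠ 0 := by contrapose! hD1; linarith
        field_simp
        ring
  have := int_hasSum (f := f) (sumP4pos m hm) (sumP4neg m hm) hpair
  have hf0 : f 0 = -1/(m:ℝ)^5 := by
    rw [hf]; simp only [Int.cast_zero, add_zero, mul_zero]
    rw [show (m:ℝ)^3 * (m:ℝ) * (m:ℝ) = (m:ℝ)^5 by ring]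
  rw [hf0] at this
  have hval : -1/(m:ℝ)^5 + (2/(m:ℝ)^3 * (-3/(4*(m:ℝ)^2)) - 1/(m:ℝ)^3 * (-3/(4*(K:ℝ)^2))
      + -3/(2*(m:ℝ)^5) + -3/(4*(K:ℝ)^2*(m:ℝ)^3)) = -4/(m:ℝ)^5 := by
    rw [hmc]
    field_simp
    ring
  rw [hval] at this
  exact this

lemma inner_even (m : ℤ) (hm : 1 ≤ m) (heven : m % 2 = 0) :
    HasSum (fun n : ℤ => 1 / ((n:ℝ)^3 * ((m:ℝ) + (n:ℝ)) * ((m:ℝ) + 2*(n:ℝ))))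
      (-Real.pi^2 / (m:ℝ)^3 + 42 / (m:ℝ)^5) := by
  have hA : (1:ℝ) ≤ (m:ℝ) := by exact_mod_cast hm
  have hA0 : (0:ℝ) < (m:ℝ) := by linarith
  have hm0 : (m:ℝ) ≠ 0 := ne_of_gt hA0
  set K : ℤ := m / 2 with hK
  have hKm : m = 2 * K := by omega
  have hK1 : 1 ≤ K := by omega
  have hmc : (m:ℝ) = 2*(K:ℝ) := by exact_mod_cast congrArg (Int.cast : ℤ → ℝ) hKm
  have hKc0 : (0:ℝ) < (K:ℝ) := by exact_mod_cast hK1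
  have hKne : (K:ℝ) ≠ 0 := ne_of_gt hKc0
  set h : ℤ → ℝ := fun n => 1 / ((n:ℝ)^3 * ((m:ℝ) + (n:ℝ)) * ((m:ℝ) + 2*(n:ℝ))) with hh
  set T : ℤ → ℝ := fun n => ((-3 / ((m:ℝ)^3 * (n:ℝ)^2) + 1 / ((m:ℝ)^2 * (n:ℝ)^3))
      + 7 / ((m:ℝ)^3 * (n:ℝ) * ((m:ℝ) + 2*(n:ℝ))))
      + -1 / ((m:ℝ)^3 * ((m:ℝ) + (n:ℝ)) * ((m:ℝ) + 2*(n:ℝ))) with hT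
  have hThs : HasSum T (((-Real.pi^2 / (m:ℝ)^3 + 0) + 28 / (m:ℝ)^5) + -4/(m:ℝ)^5) :=
    (((hasSumP1 m hm).add (hasSumP2 m hm)).add (hasSumP3_even m hm heven)).add
      (hasSumP4_even m hm heven)
  set c : ℤ → ℝ := fun n => h n - T n with hc
  have hcvanish : ∀ n : ℤ, n ∉ ({0, -m, -K} : Finset ℤ) → c n = 0 := by
    intro n hn
    simp only [Finset.mem_insert, Finset.mem_singleton] at hn
    push_neg at hn
    obtain ⟨hn0, hnm, hnK⟩ := hn
    have hx0 : (n:ℝ) ≠ 0 := by exact_mod_cast hn0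
    have hd1 : (m:ℝ) + (n:ℝ) ≠ 0 := by
      intro hcon
      apply hnm
      have : (n:ℝ) = ((-m : ℤ):ℝ) := by push_cast; linarith
      exact_mod_cast this
    have hd2 : (m:ℝ) + 2*(n:ℝ) ≠ 0 := by
      have hne : m + 2*n ≠ 0 := by omega
      intro hcon
      apply hne
      have : ((m + 2*n : ℤ):ℝ) = 0 := by push_cast; linarith
      exact_mod_cast this
    rw [hc, hh, hT]
    simp only []
    have : (m:ℝ) + (n:ℝ)*2 ≠ 0 := by contrapose! hd2; linarith
    field_simp
    ring
  have hsum := hasSum_sum_of_ne_finset_zero (L := SummationFilter.unconditional ℤ) (s := ({0, -m, -K} : Finset ℤ)) (f := c) hcvanish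
  have h0m : (0:ℤ) ∉ ({-m, -K} : Finset ℤ) := by
    simp only [Finset.mem_insert, Finset.mem_singleton]; omega
  have hmK : (-m:ℤ) ∉ ({-K} : Finset ℤ) := by
    simp only [Finset.mem_singleton]; omega
  rw [show ({0, -m, -K} : Finset ℤ) = insert 0 ({-m, -K} : Finset ℤ) from rfl,
      Finset.sum_insert h0m,
      show ({-m, -K} : Finset ℤ) = insert (-m) ({-K} : Finset ℤ) from rfl,
      Finset.sum_insert hmK, Finset.sum_singleton] at hsum
  have hc0 : c 0 = 1 / (m:ℝ)^5 := by
    rw [hc, hh, hT]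
    simp only [Int.cast_zero]
    rw [show ((0:ℝ))^3 * ((m:ℝ) + 0) * ((m:ℝ) + 2*0) = 0 by ring, div_zero,
        show ((m:ℝ)^3 * (0:ℝ)^2) = 0 by ring, div_zero,
        show ((m:ℝ)^2 * (0:ℝ)^3) = 0 by ring, div_zero,
        show ((m:ℝ)^3 * (0:ℝ) * ((m:ℝ) + 2*0)) = 0 by ring, div_zero,
        show ((m:ℝ)^3 * ((m:ℝ) + 0) * ((m:ℝ) + 2*0)) = (m:ℝ)^5 by ring]
    ring
  have hcm : c (-m) = -3 / (m:ℝ)^5 := by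
    rw [hc, hh, hT]
    simp only [Int.cast_neg]
    rw [show (-(m:ℝ))^3 * ((m:ℝ) + -(m:ℝ)) * ((m:ℝ) + 2*(-(m:ℝ))) = 0 by ring, div_zero,
        show ((m:ℝ)^3 * ((m:ℝ) + -(m:ℝ)) * ((m:ℝ) + 2*(-(m:ℝ)))) = 0 by ring, div_zero,
        show ((m:ℝ)^3 * (-(m:ℝ))^2) = (m:ℝ)^5 by ring,
        show ((m:ℝ)^2 * (-(m:ℝ))^3) = -((m:ℝ)^5) by ring,
        show ((m:ℝ)^3 * (-(m:ℝ)) * ((m:ℝ) + 2*(-(m:ℝ)))) = (m:ℝ)^5 by ring]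
    rw [div_neg]
    ring
  have hcK : c (-K) = 20 / (m:ℝ)^5 := by
    rw [hc, hh, hT]
    simp only [Int.cast_neg]
    rw [hmc]
    rw [show (-(K:ℝ))^3 * (2*(K:ℝ) + -(K:ℝ)) * (2*(K:ℝ) + 2*(-(K:ℝ))) = 0 by ring, div_zero,
        show ((2*(K:ℝ))^3 * (-(K:ℝ)) * (2*(K:ℝ) + 2*(-(K:ℝ)))) = 0 by ring, div_zero,
        show ((2*(K:ℝ))^3 * (2*(K:ℝ) + -(K:ℝ)) * (2*(K:ℝ) + 2*(-(K:ℝ)))) = 0 by ring, div_zero,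
        show ((2*(K:ℝ))^3 * (-(K:ℝ))^2) = 8*(K:ℝ)^5 by ring,
        show ((2*(K:ℝ))^2 * (-(K:ℝ))^3) = -(4*(K:ℝ)^5) by ring,
        show (2*(K:ℝ))^5 = 32*(K:ℝ)^5 by ring]
    rw [div_neg]
    field_simp
    ring
  rw [hc0, hcm, hcK] at hsum
  have hfinal := hThs.add hsum
  have hfun : (fun n => T n + c n) = h := by
    funext n
    rw [hc]; ring
  rw [hfun] at hfinal
  have hval : (((-Real.pi^2 / (m:ℝ)^3 + 0) + 28 / (m:ℝ)^5) + -4/(m:ℝ)^5)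
      + (1 / (m:ℝ)^5 + (-3 / (m:ℝ)^5 + 20 / (m:ℝ)^5))
      = -Real.pi^2 / (m:ℝ)^3 + 42 / (m:ℝ)^5 := by
    field_simp
    ring
  rw [hval] at hfinal
  exact hfinal

lemma zetaHS (w : ℂ) (hw : 1 < w.re) :
    HasSum (fun k : ℕ => (((k:ℂ)+1)^w)⁻¹) (riemannZeta w) := by
  have hsm : Summable (fun n : ℕ => (((n:ℂ)+1)^w)⁻¹) := by
    have h1 := Complex.summable_one_div_nat_cpow.mpr hw
    have h2 := (summable_nat_add_iff 1).mpr h1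
    apply h2.congr
    intro n
    push_cast
    rw [one_div]
  have hz : riemannZeta w = ∑' n : ℕ, (((n:ℂ)+1)^w)⁻¹ := by
    rw [zeta_eq_tsum_one_div_nat_add_one_cpow hw]
    congr 1
    funext n
    rw [one_div]
  rw [hz]
  exact hsm.hasSum

lemma evensHS (s : ℂ) (hs : 1 < s.re) :
    HasSum (fun k : ℕ => if 2 ∣ (k+1) then (32:ℂ) * (((k:ℂ)+1)^(s+6))⁻¹ else 0)
      ((2:ℂ)^(-s-1) * riemannZeta (s+6)) := by
  have hw : 1 < (s+6).re := by simp [Complex.add_re]; linarith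
  set f : ℕ → ℂ := fun k => if 2 ∣ (k+1) then (32:ℂ) * (((k:ℂ)+1)^(s+6))⁻¹ else 0 with hf
  have hi : Function.Injective (fun j : ℕ => 2*j+1) := by
    intro a b hab; simp only at hab; omega
  have hz : ∀ x ∉ Set.range (fun j : ℕ => 2*j+1), f x = 0 := by
    intro x hx
    rw [hf]
    apply if_neg
    intro hdvd
    apply hx
    obtain ⟨c, hc⟩ := hdvd
    exact ⟨c - 1, by simp only; omega⟩
  rw [← Function.Injective.hasSum_iff hi hz]
  have base := (zetaHS (s+6) hw).mul_left ((2:ℂ)^(-s-1))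
  apply base.congr_fun
  intro j
  have hdvd : 2 ∣ (2*j+1+1) := ⟨j+1, by omega⟩
  simp only [hf, Function.comp]
  rw [if_pos hdvd]
  have hcast : (((2*j+1 : ℕ):ℂ)+1) = ((2:ℝ):ℂ) * ((((j:ℕ):ℝ)+1 : ℝ):ℂ) := by
    push_cast; ring
  rw [hcast, Complex.mul_cpow_ofReal_nonneg (by norm_num) (by positivity)]
  rw [mul_inv]
  have h2ne : (2:ℂ) ≠ 0 := by norm_num
  have hpow : ((2:ℝ):ℂ) ^ (s+6) = (2:ℂ)^(s+6) := by norm_num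
  rw [hpow]
  have hc32 : (32:ℂ) = (2:ℂ)^(5:ℕ) := by norm_num
  have hkey : (2:ℂ)^(-s-1) = (2:ℂ)^(5:ℕ) * ((2:ℂ)^(s+6))⁻¹ := by
    rw [← Complex.cpow_natCast 2 5, ← Complex.cpow_neg, ← Complex.cpow_add _ _ h2ne]
    congr 1
    push_cast
    ring
  rw [hc32, hkey]
  have hcast2 : ((((j:ℕ):ℝ)+1 : ℝ):ℂ) = ((j:ℂ)+1) := by push_cast; ring
  rw [hcast2]
  ring

lemma outer (s : ℂ) (hs : 1 < s.re) :
    HasSum (fun k : ℕ => (((k:ℂ)+1)^(s+1))⁻¹ *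
        ((( -Real.pi^2 / ((k:ℝ)+1)^3 + (if 2 ∣ (k+1) then (42:ℝ) else 10)/((k:ℝ)+1)^5 : ℝ)) : ℂ))
      (-(Real.pi:ℂ)^2 * riemannZeta (s+4) + (10 + (2:ℂ)^(-s-1)) * riemannZeta (s+6)) := by
  have hw4 : 1 < (s+4).re := by simp [Complex.add_re]; linarith
  have hw6 : 1 < (s+6).re := by simp [Complex.add_re]; linarith
  have hA := (zetaHS (s+4) hw4).mul_left (-(Real.pi:ℂ)^2)
  have hB := (zetaHS (s+6) hw6).mul_left (10:ℂ)
  have hC := evensHS s hs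
  have total := (hA.add hB).add hC
  have hval : (-(Real.pi:ℂ)^2 * riemannZeta (s+4) + 10 * riemannZeta (s+6))
      + (2:ℂ)^(-s-1) * riemannZeta (s+6)
      = -(Real.pi:ℂ)^2 * riemannZeta (s+4) + (10 + (2:ℂ)^(-s-1)) * riemannZeta (s+6) := by
    ring
  rw [hval] at total
  apply total.congr_fun
  intro k
  have hkne : ((k:ℂ)+1) ≠ 0 := by
    intro hcon
    have : ((k:ℝ)+1 : ℝ) = 0 := by exact_mod_cast congrArg Complex.re hcon
    nlinarith [Nat.cast_nonneg (α := ℝ) k]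
  have hp3 : ((k:ℂ)+1)^(s+4) = ((k:ℂ)+1)^(s+1) * ((k:ℂ)+1)^(3:ℕ) := by
    rw [← Complex.cpow_natCast ((k:ℂ)+1) 3, ← Complex.cpow_add _ _ hkne]
    congr 1
    push_cast
    ring
  have hp5 : ((k:ℂ)+1)^(s+6) = ((k:ℂ)+1)^(s+1) * ((k:ℂ)+1)^(5:ℕ) := by
    rw [← Complex.cpow_natCast ((k:ℂ)+1) 5, ← Complex.cpow_add _ _ hkne]
    congr 1
    push_cast
    ring
  have hc3 : ((((k:ℝ)+1)^3 : ℝ) : ℂ) = ((k:ℂ)+1)^(3:ℕ) := by push_cast; ring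
  have hc5 : ((((k:ℝ)+1)^5 : ℝ) : ℂ) = ((k:ℂ)+1)^(5:ℕ) := by push_cast; ring
  have hne3 : (((k:ℂ)+1)^(3:ℕ)) ≠ 0 := pow_ne_zero _ hkne
  have hne5 : (((k:ℂ)+1)^(5:ℕ)) ≠ 0 := pow_ne_zero _ hkne
  have hbase : (((k:ℝ)+1 : ℝ):ℂ) = (k:ℂ)+1 := by push_cast; ring
  by_cases hdvd : 2 ∣ (k+1)
  · rw [if_pos hdvd, if_pos hdvd]
    simp only [Complex.ofReal_add, Complex.ofReal_div, Complex.ofReal_neg, Complex.ofReal_pow,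
      Complex.ofReal_ofNat, hbase]
    rw [hp3, hp5, mul_inv, mul_inv]
    ring
  · rw [if_neg hdvd, if_neg hdvd, add_zero]
    simp only [Complex.ofReal_add, Complex.ofReal_div, Complex.ofReal_neg, Complex.ofReal_pow,
      Complex.ofReal_ofNat, hbase]
    rw [hp3, hp5, mul_inv, mul_inv]
    ring

noncomputable section

def W (m : ℤ) : ℝ := -Real.pi^2 / (m:ℝ)^3 + (if m % 2 = 0 then (42:ℝ) else 10) / (m:ℝ)^5

lemma innerW (m : ℤ) (hm : 1 ≤ m) :
    HasSum (fun n : ℤ => 1 / ((n:ℝ)^3 * ((m:ℝ) + (n:ℝ)) * ((m:ℝ) + 2*(n:ℝ)))) (W m) := by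
  rcases Int.emod_two_eq_zero_or_one m with h | h
  · rw [W, if_pos h]; exact inner_even m hm h
  · rw [W, if_neg (by omega)]; exact inner_odd m hm h

def Mset : Type := {m : ℤ // 1 ≤ m}

def Nset (m : Mset) : Type := {n : ℤ // n ≠ 0 ∧ m.1 + n ≠ 0 ∧ m.1 + 2*n ≠ 0}

def Xset : Type := {x : ℤ × ℤ // 1 ≤ x.1 ∧ x.2 ≠ 0 ∧ x.1 + x.2 ≠ 0 ∧ x.1 + 2 * x.2 ≠ 0}

def eYX : (Σ m : Mset, Nset m) ≃ Xset where
  toFun p := ⟨(p.1.1, p.2.1), ⟨p.1.2, p.2.2.1, p.2.2.2.1, p.2.2.2.2⟩⟩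
  invFun x := ⟨⟨x.1.1, x.2.1⟩, ⟨x.1.2, x.2.2.1, x.2.2.2.1, x.2.2.2.2⟩⟩
  left_inv p := rfl
  right_inv x := rfl

def eNM : ℕ ≃ Mset where
  toFun k := ⟨(k:ℤ)+1, by omega⟩
  invFun m := (m.1 - 1).toNat
  left_inv k := by simp [Mset]
  right_inv m := by
    unfold Mset at *
    have := m.2
    ext
    simp only []
    omega

lemma norm_cpow_ge (m : ℤ) (hm : 1 ≤ m) {w : ℂ} (hw : 0 ≤ w.re) : 1 ≤ ‖(m:ℂ) ^ w‖ := by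
  have hm0 : (0:ℝ) < (m:ℝ) := by exact_mod_cast hm
  have hbase : ((m:ℤ):ℂ) = (((m:ℝ)):ℂ) := by push_cast; ring
  rw [hbase, Complex.norm_cpow_eq_rpow_re_of_pos hm0]
  calc (1:ℝ) = (m:ℝ) ^ (0:ℝ) := by rw [Real.rpow_zero]
    _ ≤ (m:ℝ) ^ w.re := Real.rpow_le_rpow_of_exponent_le (by exact_mod_cast hm) hw

lemma fiber_hasSum (s : ℂ) (m : Mset) :
    HasSum (fun n : Nset m =>
      1 / ((m.1 : ℂ) ^ (s + 1) * (n.1 : ℂ) ^ (3 : ℕ) *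
        ((m.1 : ℂ) + (n.1 : ℂ)) * ((m.1 : ℂ) + 2 * (n.1 : ℂ))))
      (((m.1:ℂ) ^ (s+1))⁻¹ * ((W m.1 : ℝ) : ℂ)) := by
  obtain ⟨mv, hm⟩ := m
  have hC : HasSum (fun n : ℤ =>
      ((1 / ((n:ℝ)^3 * ((mv:ℝ) + (n:ℝ)) * ((mv:ℝ) + 2*(n:ℝ))) : ℝ) : ℂ)) ((W mv : ℝ):ℂ) :=
    Complex.hasSum_ofReal.mpr (innerW mv hm)
  have hmul := hC.mul_left ((mv:ℂ) ^ (s+1))⁻¹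
  have hsupp : (Function.support fun n : ℤ =>
      ((mv:ℂ) ^ (s+1))⁻¹ * ((1 / ((n:ℝ)^3 * ((mv:ℝ) + (n:ℝ)) * ((mv:ℝ) + 2*(n:ℝ))) : ℝ) : ℂ))
      ⊆ {n : ℤ | n ≠ 0 ∧ mv + n ≠ 0 ∧ mv + 2*n ≠ 0} := by
    intro n hn
    simp only [Function.mem_support] at hn
    simp only [Set.mem_setOf_eq]
    by_contra hcon
    apply hn
    have hzero : (n:ℝ)^3 * ((mv:ℝ) + (n:ℝ)) * ((mv:ℝ) + 2*(n:ℝ)) = 0 := by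
      by_cases h0 : n = 0
      · subst h0; norm_num
      · by_cases h1 : mv + n = 0
        · have he : (mv:ℝ) + (n:ℝ) = 0 := by
            have := congrArg (Int.cast : ℤ → ℝ) h1; push_cast at this; linarith
          rw [he]; ring
        · have h2 : mv + 2*n = 0 := by tauto
          have he : (mv:ℝ) + 2*(n:ℝ) = 0 := by
            have := congrArg (Int.cast : ℤ → ℝ) h2; push_cast at this; linarith
          rw [he]; ring
    rw [hzero, div_zero, Complex.ofReal_zero, mul_zero]
  have hsub := (hasSum_subtype_iff_of_support_subset hsupp).mpr hmul
  apply hsub.congr_fun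
  intro n
  simp only [Function.comp]
  rw [Complex.ofReal_div, Complex.ofReal_one, Complex.ofReal_mul, Complex.ofReal_mul]
  push_cast
  rw [one_div, one_div, ← mul_inv]
  congr 1
  ring

set_option maxHeartbeats 1000000 in
theorem main_sum (s : ℂ) (hs : 1 < s.re) :
    HasSum (fun x : Xset =>
      1 / ((x.1.1 : ℂ) ^ (s + 1) * (x.1.2 : ℂ) ^ (3 : ℕ) *
        ((x.1.1 : ℂ) + (x.1.2 : ℂ)) * ((x.1.1 : ℂ) + 2 * (x.1.2 : ℂ))))
      (-(Real.pi:ℂ) ^ 2 * riemannZeta (s + 4) + (10 + (2 : ℂ) ^ (-s - 1)) * riemannZeta (s + 6)) := by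
  classical
  set F : Xset → ℂ := fun x =>
      1 / ((x.1.1 : ℂ) ^ (s + 1) * (x.1.2 : ℂ) ^ (3 : ℕ) *
        ((x.1.1 : ℂ) + (x.1.2 : ℂ)) * ((x.1.1 : ℂ) + 2 * (x.1.2 : ℂ))) with hF
  set RHS : ℂ := -(Real.pi:ℂ) ^ 2 * riemannZeta (s + 4)
      + (10 + (2 : ℂ) ^ (-s - 1)) * riemannZeta (s + 6) with hRHS
  have hFsum : Summable F := by
    have h2 : Summable (fun b : ℤ => 1 / (b:ℝ)^2) := Real.summable_one_div_int_pow.mpr one_lt_two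
    have hmaj : Summable (fun p : ℤ × ℤ => (8 * (1/(p.1:ℝ)^2)) * (1 / (p.2:ℝ)^2)) :=
      Summable.mul_of_nonneg (h2.mul_left 8) h2 (fun a => by positivity) (fun b => by positivity)
    have hmajX : Summable (fun x : Xset => (8 * (1/(x.1.1:ℝ)^2)) * (1 / (x.1.2:ℝ)^2)) :=
      hmaj.subtype _
    apply Summable.of_norm
    apply Summable.of_nonneg_of_le (fun x => norm_nonneg _) ?_ hmajX
    rintro ⟨⟨mv, nv⟩, hm, hn, h1, h2'⟩
    set j : ℤ := nv^3*(mv+nv)*(mv+2*nv) with hj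
    have hD : ((mv : ℂ) ^ (s + 1) * (nv : ℂ) ^ (3 : ℕ) *
        ((mv : ℂ) + (nv : ℂ)) * ((mv : ℂ) + 2 * (nv : ℂ)))
        = (mv:ℂ)^(s+1) * ((j:ℤ):ℂ) := by rw [hj]; push_cast; ring
    have hnorm : ‖F ⟨(mv, nv), ⟨hm, hn, h1, h2'⟩⟩‖
        = 1 / (‖(mv:ℂ)^(s+1)‖ * |(j:ℝ)|) := by
      rw [hF]
      simp only []
      rw [hD, norm_div, norm_one, norm_mul, Complex.norm_intCast]
    rw [hnorm]
    have hkey := key_ineq mv nv hm hn h1 h2'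
    have hkeyR : (mv:ℝ)^2 * (nv:ℝ)^2 ≤ 8 * |(j:ℝ)| := by
      rw [← Int.cast_abs]
      exact_mod_cast hkey
    have hA1 : 1 ≤ ‖(mv:ℂ)^(s+1)‖ := by
      apply norm_cpow_ge mv hm
      simp only [Complex.add_re, Complex.one_re]
      linarith
    have hmv : (1:ℝ) ≤ (mv:ℝ) := by exact_mod_cast hm
    have hnv : (nv:ℝ) ≠ 0 := by exact_mod_cast hn
    have hpos : (0:ℝ) < (mv:ℝ)^2 * (nv:ℝ)^2 / 8 := by
      have hm2 : (0:ℝ) < (mv:ℝ)^2 := by nlinarith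
      have hn2 : (0:ℝ) < (nv:ℝ)^2 :=
        lt_of_le_of_ne (sq_nonneg _) (Ne.symm (pow_ne_zero 2 hnv))
      exact div_pos (mul_pos hm2 hn2) (by norm_num)
    have hDge : (mv:ℝ)^2 * (nv:ℝ)^2 / 8 ≤ ‖(mv:ℂ)^(s+1)‖ * |(j:ℝ)| := by
      have step : (mv:ℝ)^2 * (nv:ℝ)^2 / 8 ≤ |(j:ℝ)| := by linarith
      calc (mv:ℝ)^2 * (nv:ℝ)^2 / 8 ≤ |(j:ℝ)| := step
        _ = 1 * |(j:ℝ)| := by ring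
        _ ≤ ‖(mv:ℂ)^(s+1)‖ * |(j:ℝ)| :=
            mul_le_mul_of_nonneg_right hA1 (abs_nonneg _)
    have hfin := one_div_le_one_div_of_le hpos hDge
    have heq : 1 / ((mv:ℝ)^2 * (nv:ℝ)^2 / 8) = (8 * (1/(mv:ℝ)^2)) * (1 / (nv:ℝ)^2) := by
      rw [one_div_div]
      field_simp
    rw [heq] at hfin
    exact hfin
  -- sigma decomposition
  have hGsum : Summable (F ∘ eYX) := (Equiv.summable_iff eYX).mpr hFsum
  have hGtot : HasSum (F ∘ eYX) (∑' y, (F ∘ eYX) y) := hGsum.hasSum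
  have hfibers : ∀ m : Mset, HasSum (fun n : Nset m => (F ∘ eYX) ⟨m, n⟩)
      (((m.1:ℂ) ^ (s+1))⁻¹ * ((W m.1 : ℝ) : ℂ)) := by
    intro m
    exact fiber_hasSum s m
  have hg : HasSum (fun m : Mset => ((m.1:ℂ) ^ (s+1))⁻¹ * ((W m.1 : ℝ) : ℂ))
      (∑' y, (F ∘ eYX) y) := hGtot.sigma hfibers
  have hg2 : HasSum (fun m : Mset => ((m.1:ℂ) ^ (s+1))⁻¹ * ((W m.1 : ℝ) : ℂ)) RHS := by
    rw [← Equiv.hasSum_iff eNM]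
    apply (outer s hs).congr_fun
    intro k
    simp only [Function.comp, eNM, Equiv.coe_fn_mk]
    have hc1 : ((((k:ℤ)+1 : ℤ)):ℂ) = (k:ℂ)+1 := by push_cast; ring
    have hWeq : W ((k:ℤ)+1)
        = -Real.pi^2 / ((k:ℝ)+1)^3 + (if 2 ∣ (k+1) then (42:ℝ) else 10)/((k:ℝ)+1)^5 := by
      rw [W]
      have hc2 : ((((k:ℤ)+1 : ℤ)):ℝ) = (k:ℝ)+1 := by push_cast; ring
      rw [hc2]
      congr 1
      congr 1
      · have hiff : (((k:ℤ)+1) % 2 = 0) ↔ (2 ∣ (k+1)) := by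
          constructor
          · intro h; omega
          · intro h; omega
        by_cases hd : 2 ∣ (k+1)
        · rw [if_pos (hiff.mpr hd), if_pos hd]
        · rw [if_neg (fun hc => hd (hiff.mp hc)), if_neg hd]
    show ((((k:ℤ)+1 : ℤ):ℂ) ^ (s+1))⁻¹ * ((W ((k:ℤ)+1) : ℝ) : ℂ) = _
    rw [hc1, hWeq]
  have hid : (∑' y, (F ∘ eYX) y) = RHS := hg.unique hg2
  rw [hid] at hGtot
  exact (Equiv.hasSum_iff eYX).mp hGtot

end

theorem sigma11_eval (s : ℂ) (hs : 1 < s.re) :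
    (∑' x : {x : ℤ × ℤ // 1 ≤ x.1 ∧ x.2 ≠ 0 ∧ x.1 + x.2 ≠ 0 ∧ x.1 + 2 * x.2 ≠ 0},
          1 / ((x.1.1 : ℂ) ^ (s + 1) * (x.1.2 : ℂ) ^ (3 : ℕ) *
            ((x.1.1 : ℂ) + (x.1.2 : ℂ)) * ((x.1.1 : ℂ) + 2 * (x.1.2 : ℂ)))) =
      -(Real.pi : ℂ) ^ 2 * riemannZeta (s + 4) +
        (10 + (2 : ℂ) ^ (-s - 1)) * riemannZeta (s + 6) := by
  exact (main_sum s hs).tsum_eq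
end

section
/- Let {R_m} (m ∈ ℕ₀) be a sequence of complex numbers, and for each m ∈ ℕ₀ define P_m = ∑_{j=0}^{⌊m/2⌋} R_{m−2j} · (iπ)^{2j}/(2j)! and Q_m = ∑_{j=0}^{⌊m/2⌋} R_{m−2j} · (iπ)^{2j}/(2j+1)!. Then for every m ∈ ℕ₀, P_m = −2·∑_{τ=0}^{⌊m/2⌋} ζ(2τ)·Q_{m−2τ}, and for every h ∈ ℕ₀, Q_{2h} = (2/π²)·∑_{τ=0}^{h} (2^{2h−2τ+2} − 1)·ζ(2h−2τ+2)·P_{2τ}. -/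
open Complex Finset

open Nat Finset PowerSeries
noncomputable def Bse : ℚ⟦X⟧ := bernoulliPowerSeries ℚ
noncomputable def Ese : ℚ⟦X⟧ := PowerSeries.exp ℚ

lemma aux_BE (a : ℚ) : rescale a Bse * (rescale a Ese - 1) = PowerSeries.C (R := ℚ) a * X := by
  have h := congrArg (rescale a) (bernoulliPowerSeries_mul_exp_sub_one ℚ)
  rw [map_mul, map_sub, map_one, rescale_X] at h
  exact h

lemma aux_EE (a b : ℚ) : rescale a Ese * rescale b Ese = rescale (a+b) Ese :=
  PowerSeries.exp_mul_exp_eq_exp_add a b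

lemma aux_E1 : rescale (1:ℚ) Ese = Ese := by rw [rescale_one]; rfl

lemma aux_S_ne (a : ℚ) (ha : a ≠ 0) : rescale a Ese - 1 ≠ 0 := by
  intro h
  have h1 : (PowerSeries.coeff (R := ℚ) 1) (rescale a Ese - 1) = a := by
    simp [Ese, coeff_rescale, PowerSeries.coeff_exp, Nat.factorial]
  rw [h] at h1
  simp at h1
  exact ha h1.symm

lemma F_symm : rescale (-1) (rescale (2:ℚ) Bse * Ese)
    = rescale (2:ℚ) Bse * Ese := by
  apply mul_right_cancel₀ (aux_S_ne 2 (by norm_num))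
  rw [map_mul, rescale_rescale]
  have e : (2:ℚ) * (-1) = -2 := by norm_num
  rw [e]
  have q1 : rescale (-1:ℚ) Ese * rescale 2 Ese = Ese := by
    rw [aux_EE]; norm_num [aux_E1]
  have q2 : rescale (-2:ℚ) Ese * rescale 1 Ese = rescale (-1:ℚ) Ese := by
    rw [aux_EE]; norm_num
  rw [aux_E1] at q2
  have hm2 := aux_BE (-2)
  have h2 := aux_BE 2
  rw [show PowerSeries.C (R := ℚ) (-2) = - PowerSeries.C (R := ℚ) 2 from map_neg _ 2] at hm2
  linear_combination (rescale (-2:ℚ) Bse) * q1 + (rescale (-2:ℚ) Bse) * q2 - Ese * hm2 - Ese * h2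

lemma D_antisymm : rescale (-1) (rescale (2:ℚ) Bse * Ese - rescale (4:ℚ) Bse * Ese)
    = -(rescale (2:ℚ) Bse * Ese - rescale (4:ℚ) Bse * Ese) := by
  apply mul_right_cancel₀ (aux_S_ne 4 (by norm_num))
  rw [map_sub, map_mul, map_mul, rescale_rescale, rescale_rescale]
  rw [show (2:ℚ) * (-1) = -2 by norm_num, show (4:ℚ) * (-1) = -4 by norm_num]
  have p1 : rescale (-1:ℚ) Ese * rescale 4 Ese = rescale (3:ℚ) Ese := by rw [aux_EE]; norm_num
  have p7 : rescale (-4:ℚ) Ese * rescale 3 Ese = rescale (-1:ℚ) Ese := by rw [aux_EE]; norm_num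
  have p3 : rescale (-2:ℚ) Ese * rescale (-2) Ese = rescale (-4:ℚ) Ese := by rw [aux_EE]; norm_num
  have p2 : rescale (-2:ℚ) Ese * rescale 3 Ese = Ese := by rw [aux_EE]; norm_num [aux_E1]
  have p5 : rescale (2:ℚ) Ese * rescale 2 Ese = rescale (4:ℚ) Ese := by rw [aux_EE]; norm_num
  have p4 : rescale (1:ℚ) Ese * rescale 2 Ese = rescale (3:ℚ) Ese := by rw [aux_EE]; norm_num
  rw [aux_E1] at p4
  have h2 := aux_BE 2
  have h4 := aux_BE 4
  have hm2 := aux_BE (-2)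
  have hm4 := aux_BE (-4)
  rw [show PowerSeries.C (R := ℚ) (-2) = - PowerSeries.C (R := ℚ) 2 from map_neg _ 2] at hm2
  rw [show PowerSeries.C (R := ℚ) (-4) = - PowerSeries.C (R := ℚ) 4 from map_neg _ 4] at hm4
  rw [show PowerSeries.C (R := ℚ) 2 = (2:ℚ⟦X⟧) from map_ofNat _ 2] at h2 hm2
  rw [show PowerSeries.C (R := ℚ) 4 = (4:ℚ⟦X⟧) from map_ofNat _ 4] at h4 hm4
  linear_combination (rescale (-2:ℚ) Bse - rescale (-4:ℚ) Bse) * p1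
    + (rescale (-2:ℚ) Bse - rescale (-4:ℚ) Bse) * p7
    + rescale (-2:ℚ) Bse * rescale (3:ℚ) Ese * p3
    - (rescale (-2:ℚ) Ese + 1) * rescale (3:ℚ) Ese * hm2
    + rescale (3:ℚ) Ese * hm4
    + ((2:ℚ⟦X⟧) * X) * p2
    - rescale (2:ℚ) Bse * Ese * p5
    - Ese * h4
    + (rescale (2:ℚ) Ese + 1) * Ese * h2
    + ((2:ℚ⟦X⟧) * X) * p4

lemma coeff_BE (a : ℚ) (n : ℕ) : (PowerSeries.coeff (R := ℚ) n) (rescale a Bse * Ese)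
    = ∑ k ∈ range (n+1), a^k * bernoulli k / (k ! * (n-k)!) := by
  rw [PowerSeries.coeff_mul, Nat.sum_antidiagonal_eq_sum_range_succ_mk]
  refine Finset.sum_congr rfl fun k hk => ?_
  rw [coeff_rescale]
  simp [Bse, Ese, bernoulliPowerSeries, PowerSeries.coeff_exp, PowerSeries.coeff_mk]
  ring

lemma ratOdd (n : ℕ) (hn : n % 2 = 1) :
    ∑ k ∈ range (n+1), (2:ℚ)^k * bernoulli k / (k ! * (n-k)!) = 0 := by
  have h := congrArg (PowerSeries.coeff (R := ℚ) n) F_symm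
  rw [coeff_rescale, coeff_BE] at h
  rw [show (-1:ℚ)^n = -1 from Odd.neg_one_pow (Nat.odd_iff.mpr hn)] at h
  linarith [h]

lemma ratEven (n : ℕ) (hn : n % 2 = 0) :
    ∑ k ∈ range (n+1), ((4:ℚ)^k - 2^k) * bernoulli k / (k ! * (n-k)!) = 0 := by
  have h := congrArg (PowerSeries.coeff (R := ℚ) n) D_antisymm
  rw [coeff_rescale, map_neg, map_sub, coeff_BE, coeff_BE,
    show (-1:ℚ)^n = 1 from Even.neg_one_pow (Nat.even_iff.mpr hn)] at h
  have hsplit : ∀ k ∈ range (n+1), ((4:ℚ)^k - 2^k) * bernoulli k / (k ! * (n-k)!)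
      = 4^k * bernoulli k / (k ! * (n-k)!) - 2^k * bernoulli k / (k ! * (n-k)!) := by
    intro k _; ring
  rw [Finset.sum_congr rfl hsplit, Finset.sum_sub_distrib]
  linarith [h]


lemma sum_range_two_mul {M : Type*} [AddCommMonoid M] (n : ℕ) (f : ℕ → M) :
    ∑ k ∈ range (2*n), f k = ∑ i ∈ range n, (f (2*i) + f (2*i+1)) := by
  induction n with
  | zero => simp
  | succ n ih =>
    rw [show 2*(n+1) = (2*n+1)+1 by ring, sum_range_succ, show 2*n+1 = (2*n)+1 from rfl,
      sum_range_succ, ih, sum_range_succ, add_assoc]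

lemma bern_odd_zero (i : ℕ) (hi : 1 ≤ i) : bernoulli (2*i+1) = 0 := by
  rw [bernoulli_eq_bernoulli'_of_ne_one (by omega)]
  exact bernoulli'_eq_zero_of_odd (Nat.odd_iff.mpr (by omega)) (by omega)

lemma ratA' (j : ℕ) : ∑ τ ∈ range (j+1), (4:ℚ)^τ * bernoulli (2*τ) / ((2*τ)! * (2*(j-τ)+1)!)
    = 1/(2*j)! := by
  have h0 := ratOdd (2*j+1) (by omega)
  rw [show 2*j+1+1 = 2*(j+1) by ring, sum_range_two_mul, sum_add_distrib] at h0
  have hb : ∑ i ∈ range (j+1),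
      (2:ℚ)^(2*i+1) * bernoulli (2*i+1) / ((2*i+1)! * (2*j+1-(2*i+1))!) = -1/(2*j)! := by
    rw [Finset.sum_eq_single 0]
    · norm_num [bernoulli_one, Nat.factorial]
    · intro i _ hi
      rw [bern_odd_zero i (by omega)]
      simp
    · intro h; exact absurd (Finset.mem_range.mpr (by omega)) h
  have ha : ∑ i ∈ range (j+1),
      (2:ℚ)^(2*i) * bernoulli (2*i) / ((2*i)! * (2*j+1-2*i)!) =
      ∑ τ ∈ range (j+1), (4:ℚ)^τ * bernoulli (2*τ) / ((2*τ)! * (2*(j-τ)+1)!) := by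
    refine Finset.sum_congr rfl fun τ hτ => ?_
    have hτj : τ ≤ j := by simpa using Nat.lt_succ_iff.mp (Finset.mem_range.mp hτ)
    rw [show 2*j+1-2*τ = 2*(j-τ)+1 by omega, pow_mul]
    norm_num
  rw [ha, hb, neg_div] at h0
  linarith [h0]

lemma ratB' (j : ℕ) : ∑ s ∈ range (j+1),
    (4:ℚ)^(s+1) * ((4:ℚ)^(s+1) - 1) * bernoulli (2*s+2) / ((2*s+2)! * (2*(j-s))!)
    = 1/(2*j+1)! := by
  have h0 := ratEven (2*j+2) (by omega)
  rw [show 2*j+2+1 = 2*(j+1)+1 by ring, sum_range_succ', sum_range_two_mul,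
    sum_add_distrib] at h0
  have h00 : ((4:ℚ)^(0:ℕ) - 2^(0:ℕ)) * bernoulli 0 / ((0:ℕ)! * (2*j+2-0)!) = 0 := by
    norm_num
  have hb : ∑ i ∈ range (j+1),
      ((4:ℚ)^(2*i+1) - 2^(2*i+1)) * bernoulli (2*i+1) / ((2*i+1)! * (2*j+2-(2*i+1))!)
      = -1/(2*j+1)! := by
    rw [Finset.sum_eq_single 0]
    · norm_num [bernoulli_one, Nat.factorial, show 2*j+2-1 = 2*j+1 by omega]
    · intro i _ hi
      rw [bern_odd_zero i (by omega)]
      simp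
    · intro h; exact absurd (Finset.mem_range.mpr (by omega)) h
  have ha : ∑ i ∈ range (j+1),
      ((4:ℚ)^(2*i+1+1) - 2^(2*i+1+1)) * bernoulli (2*i+1+1) / ((2*i+1+1)! * (2*j+2-(2*i+1+1))!)
      = ∑ s ∈ range (j+1),
      (4:ℚ)^(s+1) * ((4:ℚ)^(s+1) - 1) * bernoulli (2*s+2) / ((2*s+2)! * (2*(j-s))!) := by
    refine Finset.sum_congr rfl fun s hs => ?_
    have hsj : s ≤ j := by simpa using Nat.lt_succ_iff.mp (Finset.mem_range.mp hs)
    have e1 : (2:ℚ)^(2*s+1+1) = 4^(s+1) := by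
      rw [show 2*s+1+1 = 2*(s+1) by ring, pow_mul]; norm_num
    have e2 : (4:ℚ)^(2*s+1+1) = 4^(s+1) * 4^(s+1) := by
      rw [show 2*s+1+1 = (s+1)+(s+1) by ring, pow_add]
    rw [show 2*j+2-(2*s+1+1) = 2*(j-s) by omega, show 2*s+1+1 = 2*s+2 from rfl, e1, e2]
    ring
  rw [h00, ha, hb, neg_div] at h0
  linarith [h0]

open Complex

lemma hIpi (k : ℕ) : (Complex.I*(Real.pi:ℂ))^(2*k) = (-1)^k * (Real.pi:ℂ)^(2*k) := by
  rw [mul_pow, pow_mul, Complex.I_sq]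

lemma lemA (j : ℕ) : ∑ τ ∈ Finset.range (j+1),
    (-2 : ℂ) * riemannZeta (2*τ) * (Complex.I*(Real.pi:ℂ))^(2*(j-τ)) / ((2*(j-τ)+1)! : ℂ)
    = (Complex.I*(Real.pi:ℂ))^(2*j) / ((2*j)! : ℂ) := by
  have key : ∀ τ ∈ Finset.range (j+1),
      (-2 : ℂ) * riemannZeta (2*τ) * (Complex.I*(Real.pi:ℂ))^(2*(j-τ)) / ((2*(j-τ)+1)! : ℂ)
      = (-1)^j * (Real.pi:ℂ)^(2*j)
        * (((4:ℚ)^τ * bernoulli (2*τ) / ((2*τ)! * (2*(j-τ)+1)!) : ℚ) : ℂ) := by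
    intro τ hτ
    have hτj : τ ≤ j := Nat.lt_succ_iff.mp (Finset.mem_range.mp hτ)
    obtain ⟨k, rfl⟩ : ∃ k, j = τ + k := ⟨j - τ, by omega⟩
    rw [show τ + k - τ = k by omega, hIpi]
    match τ with
    | 0 =>
      norm_num [riemannZeta_zero]
      push_cast
      rw [div_eq_mul_inv]
    | (t+1) =>
      rw [show ((2:ℂ) * ((t+1 : ℕ):ℂ)) = 2 * ((t+1 : ℕ):ℂ) from rfl,
        riemannZeta_two_mul_nat (Nat.succ_ne_zero t),
        show 2*(t+1) - 1 = 2*t+1 from by omega]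
      push_cast
      simp only [Nat.succ_eq_add_one]
      have h2 : ((Real.pi:ℂ))^(2*(t+1+k)) = (Real.pi:ℂ)^(2*(t+1)) * (Real.pi:ℂ)^(2*k) := by
        rw [← pow_add]; ring_nf
      have h3 : ((-1:ℂ))^(t+1+k) = (-1)^(t+1) * (-1)^k := by rw [← pow_add]
      have h4 : (4:ℂ)^(t+1) = 2 * 2^(2*t+1) := by
        rw [show (4:ℂ) = 2^2 by norm_num, ← pow_mul, show 2*(t+1) = (2*t+1)+1 by ring, pow_succ]
        ring
      rw [h2, h3, h4]
      have hf1 := (Nat.cast_ne_zero (R := ℂ)).mpr (Nat.factorial_ne_zero (2*(t+1)))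
      have hf2 := (Nat.cast_ne_zero (R := ℂ)).mpr (Nat.factorial_ne_zero (2*k+1))
      field_simp
      ring
  rw [Finset.sum_congr rfl key, ← Finset.mul_sum]
  rw [show ∑ τ ∈ Finset.range (j+1),
      (((4:ℚ)^τ * bernoulli (2*τ) / ((2*τ)! * (2*(j-τ)+1)!) : ℚ) : ℂ)
      = ((∑ τ ∈ Finset.range (j+1),
        ((4:ℚ)^τ * bernoulli (2*τ) / ((2*τ)! * (2*(j-τ)+1)!)) : ℚ) : ℂ) from by push_cast; rfl]
  rw [ratA' j, hIpi j]
  push_cast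
  ring

lemma lemB (j : ℕ) : ∑ τ ∈ Finset.range (j+1),
    ((2:ℂ)^(2*τ+2) - 1) * riemannZeta (2*(τ:ℂ)+2) * (Complex.I*(Real.pi:ℂ))^(2*(j-τ))
      / ((2*(j-τ))! : ℂ)
    = ((Real.pi:ℂ)^2/2) * ((Complex.I*(Real.pi:ℂ))^(2*j) / ((2*j+1)! : ℂ)) := by
  have key : ∀ τ ∈ Finset.range (j+1),
      ((2:ℂ)^(2*τ+2) - 1) * riemannZeta (2*(τ:ℂ)+2) * (Complex.I*(Real.pi:ℂ))^(2*(j-τ))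
        / ((2*(j-τ))! : ℂ)
      = (-1)^j * (Real.pi:ℂ)^(2*j) * ((Real.pi:ℂ)^2/2)
        * (((4:ℚ)^(τ+1) * ((4:ℚ)^(τ+1) - 1) * bernoulli (2*τ+2)
            / ((2*τ+2)! * (2*(j-τ))!) : ℚ) : ℂ) := by
    intro τ hτ
    have hτj : τ ≤ j := Nat.lt_succ_iff.mp (Finset.mem_range.mp hτ)
    obtain ⟨k, rfl⟩ : ∃ k, j = τ + k := ⟨j - τ, by omega⟩
    rw [show τ + k - τ = k by omega, hIpi,
      show (2*(τ:ℂ)+2) = 2*((τ+1:ℕ):ℂ) from by push_cast; ring,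
      riemannZeta_two_mul_nat (Nat.succ_ne_zero τ),
      show 2*(τ+1) - 1 = 2*τ+1 from by omega,
      show 2*(τ+1) = 2*τ+2 from by ring]
    push_cast
    have h2 : ((Real.pi:ℂ))^(2*(τ+1+k)) = (Real.pi:ℂ)^(2*τ) * (Real.pi:ℂ)^2
        * (Real.pi:ℂ)^(2*k) := by
      rw [← pow_add, ← pow_add]; ring_nf
    have h2' : ((Real.pi:ℂ))^(2*(τ+k)) = (Real.pi:ℂ)^(2*τ) * (Real.pi:ℂ)^(2*k) := by
      rw [← pow_add]; ring_nf
    have h3 : ((-1:ℂ))^(τ+k) = (-1)^τ * (-1)^k := by rw [← pow_add]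
    have h3' : ((-1:ℂ))^(τ+1+1) = (-1)^τ := by
      rw [show τ+1+1 = τ+2 from rfl, pow_add]; norm_num
    have h4 : (4:ℂ)^(τ+1) = 2 * 2^(2*τ+1) := by
      rw [show (4:ℂ) = 2^2 by norm_num, ← pow_mul, show 2*(τ+1) = (2*τ+1)+1 by ring, pow_succ]
      ring
    have h5 : (2:ℂ)^(2*τ+2) = 2 * 2^(2*τ+1) := by rw [pow_succ]; ring
    simp only [Nat.succ_eq_add_one]
    rw [show ((Real.pi:ℂ))^(2*τ+2) = (Real.pi:ℂ)^(2*τ) * (Real.pi:ℂ)^2 from by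
      rw [← pow_add]]
    rw [h2', h3, h3', h4, h5]
    have hf1 := (Nat.cast_ne_zero (R := ℂ)).mpr (Nat.factorial_ne_zero (2*τ+2))
    have hf2 := (Nat.cast_ne_zero (R := ℂ)).mpr (Nat.factorial_ne_zero (2*k))
    field_simp
  rw [Finset.sum_congr rfl key, ← Finset.mul_sum]
  rw [show ∑ τ ∈ Finset.range (j+1),
      (((4:ℚ)^(τ+1) * ((4:ℚ)^(τ+1) - 1) * bernoulli (2*τ+2)
          / ((2*τ+2)! * (2*(j-τ))!) : ℚ) : ℂ)
      = ((∑ τ ∈ Finset.range (j+1),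
        ((4:ℚ)^(τ+1) * ((4:ℚ)^(τ+1) - 1) * bernoulli (2*τ+2)
          / ((2*τ+2)! * (2*(j-τ))!)) : ℚ) : ℂ) from by push_cast; rfl]
  rw [ratB' j, hIpi j]
  push_cast
  ring

lemma sum_triangle {M : Type*} [AddCommMonoid M] (N : ℕ) (f : ℕ → ℕ → M) :
    ∑ τ ∈ range (N+1), ∑ k ∈ range (N-τ+1), f τ k
      = ∑ j ∈ range (N+1), ∑ τ ∈ range (j+1), f τ (j-τ) := by
  rw [Finset.sum_sigma', Finset.sum_sigma']
  refine Finset.sum_nbij' (i := fun p => ⟨p.1 + p.2, p.1⟩) (j := fun p => ⟨p.2, p.1 - p.2⟩)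
    ?_ ?_ ?_ ?_ ?_
  · rintro ⟨a, b⟩ hp
    simp only [Finset.mem_sigma, Finset.mem_range] at hp ⊢
    omega
  · rintro ⟨a, b⟩ hp
    simp only [Finset.mem_sigma, Finset.mem_range] at hp ⊢
    omega
  · rintro ⟨a, b⟩ hp
    simp only [Finset.mem_sigma, Finset.mem_range] at hp
    dsimp only
    have e1 : a + b - a = b := by omega
    rw [e1]
  · rintro ⟨a, b⟩ hp
    simp only [Finset.mem_sigma, Finset.mem_range] at hp
    dsimp only
    have e1 : b + (a - b) = a := by omega
    rw [e1]
  · rintro ⟨a, b⟩ hp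
    simp

theorem PQ_relations (R P Q : ℕ → ℂ)
    (hP : ∀ m : ℕ, P m = ∑ j ∈ Finset.range (m / 2 + 1),
      R (m - 2 * j) * (Complex.I * (Real.pi : ℂ)) ^ (2 * j) / (Nat.factorial (2 * j)))
    (hQ : ∀ m : ℕ, Q m = ∑ j ∈ Finset.range (m / 2 + 1),
      R (m - 2 * j) * (Complex.I * (Real.pi : ℂ)) ^ (2 * j) / (Nat.factorial (2 * j + 1))) :
    (∀ m : ℕ, P m = -2 * ∑ τ ∈ Finset.range (m / 2 + 1),
        riemannZeta (2 * τ) * Q (m - 2 * τ)) ∧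
      ∀ h : ℕ, Q (2 * h) = (2 / (Real.pi : ℂ) ^ 2) * ∑ τ ∈ Finset.range (h + 1),
        ((2 : ℂ) ^ (2 * h - 2 * τ + 2) - 1) * riemannZeta (2 * h - 2 * τ + 2) * P (2 * τ) := by
  constructor
  · intro m
    set N := m / 2 with hN
    set f : ℕ → ℕ → ℂ := fun τ k => (-2:ℂ) * riemannZeta (2*(τ:ℂ))
      * (Complex.I*(Real.pi:ℂ))^(2*k) / ((2*k+1)! : ℂ) * R (m - 2*(τ+k)) with hf
    have step1 : -2 * ∑ τ ∈ Finset.range (N+1), riemannZeta (2*(τ:ℂ)) * Q (m - 2*τ)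
        = ∑ τ ∈ Finset.range (N+1), ∑ k ∈ Finset.range (N-τ+1), f τ k := by
      rw [Finset.mul_sum]
      refine Finset.sum_congr rfl fun τ hτ => ?_
      have hτN : τ ≤ N := Nat.lt_succ_iff.mp (Finset.mem_range.mp hτ)
      rw [hQ (m-2*τ), show (m-2*τ)/2 = N - τ from by omega, Finset.mul_sum, Finset.mul_sum]
      refine Finset.sum_congr rfl fun k hk => ?_
      rw [hf]
      dsimp only
      rw [show m - 2*τ - 2*k = m - 2*(τ+k) from by omega]
      ring
    rw [step1, sum_triangle N f, hP m]
    refine Finset.sum_congr rfl fun j hj => ?_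
    have hjN : j ≤ N := Nat.lt_succ_iff.mp (Finset.mem_range.mp hj)
    have hterm : ∀ τ ∈ Finset.range (j+1), f τ (j - τ)
        = ((-2:ℂ) * riemannZeta (2*(τ:ℂ)) * (Complex.I*(Real.pi:ℂ))^(2*(j-τ))
            / ((2*(j-τ)+1)! : ℂ)) * R (m - 2*j) := by
      intro τ hτ
      have hτj : τ ≤ j := Nat.lt_succ_iff.mp (Finset.mem_range.mp hτ)
      rw [hf]
      dsimp only
      rw [show τ + (j - τ) = j from by omega]
    rw [Finset.sum_congr rfl hterm, ← Finset.sum_mul, lemA j]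
    ring
  · intro h
    set g : ℕ → ℕ → ℂ := fun τ k => ((2:ℂ)^(2*τ+2) - 1) * riemannZeta (2*(τ:ℂ)+2)
      * (Complex.I*(Real.pi:ℂ))^(2*k) / ((2*k)! : ℂ) * R (2*(h-τ) - 2*k) with hg
    have step1 : ∑ τ ∈ Finset.range (h+1),
        ((2:ℂ)^(2*h-2*τ+2) - 1) * riemannZeta (2*(h:ℂ) - 2*(τ:ℂ) + 2) * P (2*τ)
        = ∑ τ ∈ Finset.range (h+1), ∑ k ∈ Finset.range (h - τ + 1), g τ k := by
      rw [← Finset.sum_range_reflect]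
      refine Finset.sum_congr rfl fun τ hτ => ?_
      have hτh : τ ≤ h := Nat.lt_succ_iff.mp (Finset.mem_range.mp hτ)
      simp only [Nat.add_sub_cancel]
      rw [show 2*h - 2*(h-τ) + 2 = 2*τ+2 from by omega,
        show (2*(h:ℂ) - 2*((h-τ:ℕ):ℂ) + 2) = 2*(τ:ℂ)+2 from by
          push_cast [Nat.cast_sub hτh]; ring,
        hP (2*(h-τ)), show (2*(h-τ))/2 = h-τ from by omega, Finset.mul_sum]
      refine Finset.sum_congr rfl fun k hk => ?_
      rw [hg]
      dsimp only
      ring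
    rw [hQ (2*h), show (2*h)/2 = h from by omega, step1, sum_triangle h g, Finset.mul_sum]
    refine Finset.sum_congr rfl fun j hj => ?_
    have hjh : j ≤ h := Nat.lt_succ_iff.mp (Finset.mem_range.mp hj)
    have hterm : ∀ τ ∈ Finset.range (j+1), g τ (j - τ)
        = (((2:ℂ)^(2*τ+2) - 1) * riemannZeta (2*(τ:ℂ)+2)
            * (Complex.I*(Real.pi:ℂ))^(2*(j-τ)) / ((2*(j-τ))! : ℂ)) * R (2*h - 2*j) := by
      intro τ hτ
      have hτj : τ ≤ j := Nat.lt_succ_iff.mp (Finset.mem_range.mp hτ)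
      rw [hg]
      dsimp only
      rw [show 2*(h-τ) - 2*(j-τ) = 2*h - 2*j from by omega]
    rw [Finset.sum_congr rfl hterm, ← Finset.sum_mul, lemB j]
    have hπ : (Real.pi : ℂ) ≠ 0 := Complex.ofReal_ne_zero.mpr Real.pi_ne_zero
    have hc : (2:ℂ)/(Real.pi:ℂ)^2 * ((Real.pi:ℂ)^2/2) = 1 := by field_simp
    linear_combination (-((Complex.I*(Real.pi:ℂ))^(2*j) / ((2*j+1)! : ℂ) * R (2*h - 2*j))) * hc
end
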